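/- arXiv:2408.11786 — 3 statements merged into one kernel-verified Lean document; each statement's English description precedes it below -/
import Mathlib

section
/- Let x ∈ ℝⁿ have all coordinates nonzero and let P^x := (∂̂ X_k)ᵗ (∂̂ X_k² ∂̂ᵗ)⁻¹ (∂̂ X_k). Then for every (k+1)-element subset τ of [n], the diagonal entry satisfies P^x(τ,τ) = z⁻¹ · Σ_{i∈τ} x_i². -/
open Matrix

/-- The `j`-element subsets of the vertex set `[n]` (modelled as `Fin n`). -/
abbrev Face (n j : ℕ) := {s : Finset (Fin n) // s.card = j}

/-- The `j`-element subsets of `[n]` not containing the last vertex `n`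
(the vertex of `Fin n` with value `n - 1`). -/
abbrev HFace (n j : ℕ) :=
  {s : Finset (Fin n) // s.card = j ∧ ∀ a ∈ s, (a : ℕ) < n - 1}

/-- The `k`-dimensional boundary matrix `∂`: rows indexed by `k`-subsets `σ`,
columns by `(k+1)`-subsets `τ`; the entry is `(-1)^m` if `σ = τ \ {τ_m}`
(where `τ = {τ_0 < ⋯ < τ_k}`), and `0` otherwise. -/
noncomputable def bdry (n k : ℕ) : Matrix (Face n k) (Face n (k+1)) ℝ :=
  fun σ τ => ∑ a ∈ τ.1,
    if σ.1 = τ.1.erase a then (-1 : ℝ) ^ ((τ.1.filter (fun b => b < a)).card) else 0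

/-- The submatrix `∂̂` of `∂` consisting of the rows indexed by `k`-subsets
not containing the vertex `n`. -/
noncomputable def bdryHat (n k : ℕ) : Matrix (HFace n k) (Face n (k+1)) ℝ :=
  fun σ τ => bdry n k ⟨σ.1, σ.2.1⟩ τ

/-- The submatrix `M_{•,T}` of `M` with columns restricted to `T`. -/
def colSub {ι κ : Type*} (M : Matrix ι κ ℝ) (T : Finset κ) :
    Matrix ι {τ // τ ∈ T} ℝ :=
  fun i t => M i t.1

/- The squared determinant of a matrix whose row and column index types are in
bijection (`0` if there is no bijection); independent of the chosen bijection. -/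
open scoped Classical in
noncomputable def detSq {ι κ : Type*} [Fintype ι] [DecidableEq ι] [Fintype κ]
    (M : Matrix ι κ ℝ) : ℝ :=
  if h : Nonempty (ι ≃ κ) then ((M.submatrix id h.some).det) ^ 2 else 0

/-- The degree `d_i(T)`: the number of members of `T` containing the vertex `i`. -/
def deg (n k : ℕ) (T : Finset (Face n (k+1))) (i : Fin n) : ℕ :=
  (T.filter (fun τ => i ∈ τ.1)).card

/-- The diagonal matrix `X_j` indexed by `j`-subsets, with entries `∏_{i∈σ} x_i`. -/
noncomputable def Xdiag (n j : ℕ) (x : Fin n → ℝ) :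
    Matrix (Face n j) (Face n j) ℝ :=
  Matrix.diagonal (fun σ => ∏ i ∈ σ.1, x i)

attribute [local simp] Finset.filter_insert

namespace ProjAux

variable {n : ℕ}

/-- position count -/
def pos (s : Finset (Fin n)) (a : Fin n) : ℕ := (s.filter (fun b => b < a)).card

/-- sign -/
noncomputable def sgn (s : Finset (Fin n)) (a : Fin n) : ℝ := (-1 : ℝ) ^ (pos s a)

lemma sgn_mul_self (s : Finset (Fin n)) (a : Fin n) : sgn s a * sgn s a = 1 := by
  rw [sgn, ← pow_add]
  exact Even.neg_one_pow ⟨pos s a, rfl⟩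

lemma sgn_ne_zero (s : Finset (Fin n)) (a : Fin n) : sgn s a ≠ 0 := by
  simp [sgn]

lemma pos_insert_of_not_lt {a b : Fin n} (s : Finset (Fin n)) (h : ¬ b < a) :
    pos (insert b s) a = pos s a := by
  rw [pos, Finset.filter_insert, if_neg h]; rfl

lemma pos_insert_of_lt {a b : Fin n} {s : Finset (Fin n)} (hb : b ∉ s) (h : b < a) :
    pos (insert b s) a = pos s a + 1 := by
  rw [pos, Finset.filter_insert, if_pos h,
    Finset.card_insert_of_notMem (fun hc => hb (Finset.mem_filter.mp hc).1)]
  rfl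

/-- raw boundary entry on Finsets -/
noncomputable def bdryF (s t : Finset (Fin n)) : ℝ :=
  ∑ a ∈ t, if s = t.erase a then (-1 : ℝ) ^ ((t.filter (fun b => b < a)).card) else 0

lemma bdry_eq_bdryF (k : ℕ) (σ : Face n k) (τ : Face n (k+1)) :
    bdry n k σ τ = bdryF σ.1 τ.1 := rfl

lemma bdryF_apply {s t : Finset (Fin n)} {a : Fin n} (ha : a ∈ t) (h : s = t.erase a) :
    bdryF s t = sgn t a := by
  rw [bdryF, Finset.sum_eq_single a]
  · rw [if_pos h]; rfl
  · intro b hb hba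
    rw [if_neg]
    intro hc
    exact hba (Finset.erase_injOn t hb ha (hc.symm.trans h))
  · intro h'; exact absurd ha h'

lemma bdryF_eq_zero {s t : Finset (Fin n)} (h : ¬ s ⊆ t) : bdryF s t = 0 := by
  rw [bdryF]
  refine Finset.sum_eq_zero fun a ha => ?_
  rw [if_neg]
  intro hc
  exact h (hc ▸ Finset.erase_subset a t)

/-- for `σ ⊆ τ` with cards `j, j+1`, `σ = τ.erase a` for a unique `a`. -/
lemma exists_erase {j : ℕ} (σ : Face n j) (τ : Face n (j+1)) (h : σ.1 ⊆ τ.1) :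
    ∃ a ∈ τ.1, a ∉ σ.1 ∧ σ.1 = τ.1.erase a := by
  have hc : (τ.1 \ σ.1).card = 1 := by
    rw [Finset.card_sdiff_of_subset h, σ.2, τ.2]; omega
  obtain ⟨a, ha⟩ := Finset.card_eq_one.mp hc
  have ham : a ∈ τ.1 \ σ.1 := ha ▸ Finset.mem_singleton_self a
  rw [Finset.mem_sdiff] at ham
  refine ⟨a, ham.1, ham.2, ?_⟩
  rw [Finset.erase_eq, ← ha, Finset.sdiff_sdiff_self_left,
    Finset.inter_eq_right.mpr h]

lemma exists_insert' {j : ℕ} (τ : Face n j) (γ : Face n (j+1)) (h : τ.1 ⊆ γ.1) :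
    ∃ a ∈ γ.1, a ∉ τ.1 ∧ γ.1 = insert a τ.1 := by
  obtain ⟨a, ha, hna, he⟩ := exists_erase τ γ h
  refine ⟨a, ha, hna, ?_⟩
  rw [he, Finset.insert_erase ha]

/-- summation over all `j`-faces of a function vanishing off the facets of `τ`. -/
lemma sum_faces {j : ℕ} (τ : Face n (j+1)) (f : Finset (Fin n) → ℝ)
    (hf : ∀ σ : Face n j, ¬ σ.1 ⊆ τ.1 → f σ.1 = 0) :
    ∑ σ : Face n j, f σ.1 = ∑ a ∈ τ.1, f (τ.1.erase a) := by
  have key : ∀ σ : Face n j, f σ.1 = ∑ a ∈ τ.1, if σ.1 = τ.1.erase a then f σ.1 else 0 := by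
    intro σ
    by_cases h : σ.1 ⊆ τ.1
    · obtain ⟨a, ha, hna, he⟩ := exists_erase σ τ h
      rw [Finset.sum_eq_single a]
      · rw [if_pos he]
      · intro b hb hba
        rw [if_neg]
        intro hc
        exact hba (Finset.erase_injOn τ.1 hb ha (hc.symm.trans he))
      · intro h'; exact absurd ha h'
    · rw [hf σ h]
      refine (Finset.sum_eq_zero fun a ha => ?_).symm
      rw [if_neg]
      intro hc
      exact h (hc ▸ Finset.erase_subset a τ.1)
  calc ∑ σ : Face n j, f σ.1
      = ∑ σ : Face n j, ∑ a ∈ τ.1, if σ.1 = τ.1.erase a then f σ.1 else 0 :=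
        Finset.sum_congr rfl fun σ _ => key σ
    _ = ∑ a ∈ τ.1, ∑ σ : Face n j, if σ.1 = τ.1.erase a then f σ.1 else 0 := Finset.sum_comm
    _ = ∑ a ∈ τ.1, f (τ.1.erase a) := by
        refine Finset.sum_congr rfl fun a ha => ?_
        have hcard : (τ.1.erase a).card = j := by
          rw [Finset.card_erase_of_mem ha, τ.2]
          omega
        rw [Finset.sum_eq_single (⟨τ.1.erase a, hcard⟩ : Face n j)]
        · rw [if_pos rfl]
        · intro σ _ hσ
          rw [if_neg (fun hc => hσ (Subtype.ext hc))]
        · intro h'; exact absurd (Finset.mem_univ _) h'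

/-- summation over all `(j+1)`-faces of a function vanishing off cofacets of `τ`. -/
lemma sum_cofaces {j : ℕ} (τ : Face n j) (g : Finset (Fin n) → ℝ)
    (hg : ∀ γ : Face n (j+1), ¬ τ.1 ⊆ γ.1 → g γ.1 = 0) :
    ∑ γ : Face n (j+1), g γ.1 = ∑ a ∈ τ.1ᶜ, g (insert a τ.1) := by
  have key : ∀ γ : Face n (j+1), g γ.1 = ∑ a ∈ τ.1ᶜ, if γ.1 = insert a τ.1 then g γ.1 else 0 := by
    intro γ
    by_cases h : τ.1 ⊆ γ.1
    · obtain ⟨a, ha, hna, he⟩ := exists_insert' τ γ h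
      rw [Finset.sum_eq_single a]
      · rw [if_pos he]
      · intro b hb hba
        rw [if_neg]
        intro hc
        have : a ∈ insert b τ.1 := by rw [← hc, he]; exact Finset.mem_insert_self a τ.1
        rcases Finset.mem_insert.mp this with h1 | h1
        · exact hba h1.symm
        · exact hna h1
      · intro h'; exact absurd (Finset.mem_compl.mpr hna) h'
    · rw [hg γ h]
      refine (Finset.sum_eq_zero fun a ha => ?_).symm
      rw [if_neg]
      intro hc
      exact h (hc ▸ (Finset.subset_insert a τ.1))
  calc ∑ γ : Face n (j+1), g γ.1
      = ∑ γ : Face n (j+1), ∑ a ∈ τ.1ᶜ, if γ.1 = insert a τ.1 then g γ.1 else 0 :=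
        Finset.sum_congr rfl fun γ _ => key γ
    _ = ∑ a ∈ τ.1ᶜ, ∑ γ : Face n (j+1), if γ.1 = insert a τ.1 then g γ.1 else 0 := Finset.sum_comm
    _ = ∑ a ∈ τ.1ᶜ, g (insert a τ.1) := by
        refine Finset.sum_congr rfl fun a ha => ?_
        have hna : a ∉ τ.1 := Finset.mem_compl.mp ha
        have hcard : (insert a τ.1).card = j + 1 := by
          rw [Finset.card_insert_of_notMem hna, τ.2]
        rw [Finset.sum_eq_single (⟨insert a τ.1, hcard⟩ : Face n (j+1))]
        · rw [if_pos rfl]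
        · intro γ _ hγ
          rw [if_neg (fun hc => hγ (Subtype.ext hc))]
        · intro h'; exact absurd (Finset.mem_univ _) h'

end ProjAux
namespace ProjAux

variable {n : ℕ}

lemma pos_erase_of_lt {a b : Fin n} (s : Finset (Fin n)) (h : a < b) :
    pos (s.erase b) a = pos s a := by
  rw [pos, Finset.filter_erase, Finset.erase_eq_of_notMem]
  · rfl
  · intro hc
    exact absurd ((Finset.mem_filter.mp hc).2) (asymm h)

lemma pos_erase_of_gt {a b : Fin n} {s : Finset (Fin n)} (hb : b ∈ s) (h : b < a) :
    pos s a = pos (s.erase b) a + 1 := by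
  have hmem : b ∈ s.filter (fun c => c < a) := Finset.mem_filter.mpr ⟨hb, h⟩
  have hpos : 0 < (s.filter (fun c => c < a)).card := Finset.card_pos.mpr ⟨b, hmem⟩
  rw [pos, pos, Finset.filter_erase, Finset.card_erase_of_mem hmem]
  omega

/-- sign cancellation for `∂∂ = 0`. -/
lemma bb_sign {γ : Finset (Fin n)} {i j : Fin n} (hi : i ∈ γ) (hj : j ∈ γ) (hij : i < j) :
    sgn (γ.erase i) j * sgn γ i + sgn (γ.erase j) i * sgn γ j = 0 := by
  have h1 : sgn (γ.erase j) i = sgn γ i := by rw [sgn, sgn, pos_erase_of_lt _ hij]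
  have h2 : sgn γ j = - sgn (γ.erase i) j := by
    rw [sgn, sgn, pos_erase_of_gt hi hij, pow_succ]
    ring
  rw [h1, h2]
  ring

/-- sign cancellation for the level identity. -/
lemma lvl_sign {s : Finset (Fin n)} {i i' : Fin n} (hi : i ∉ s) (hi' : i' ∉ s) (hne : i ≠ i') :
    sgn (insert i s) i * sgn (insert i' s) i' +
      sgn (insert i' (insert i s)) i' * sgn (insert i' (insert i s)) i = 0 := by
  rcases lt_or_gt_of_ne hne with h | h
  · have e1 : pos (insert i' (insert i s)) i = pos (insert i s) i :=
      pos_insert_of_not_lt _ (asymm h)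
    have e2 : pos (insert i' (insert i s)) i' = pos (insert i' s) i' + 1 := by
      rw [Finset.insert_comm]
      exact pos_insert_of_lt (fun hc => (Finset.mem_insert.mp hc).elim hne hi) h
    rw [sgn, sgn, sgn, sgn, e1, e2, pow_succ]
    ring
  · have e1 : pos (insert i' (insert i s)) i' = pos (insert i' s) i' := by
      rw [Finset.insert_comm]
      exact pos_insert_of_not_lt _ (asymm h)
    have e2 : pos (insert i' (insert i s)) i = pos (insert i s) i + 1 :=
      pos_insert_of_lt (fun hc => (Finset.mem_insert.mp hc).elim (Ne.symm hne) hi') h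
    rw [sgn, sgn, sgn, sgn, e1, e2, pow_succ]
    ring

/-- `∂ ∘ ∂ = 0`. -/
lemma bdry_mul_bdry (j : ℕ) : (bdry n j) * (bdry n (j+1)) = 0 := by
  ext σ γ
  rw [Matrix.mul_apply, Matrix.zero_apply]
  have : ∀ τ : Face n (j+1), bdry n j σ τ * bdry n (j+1) τ γ
      = (fun t => bdryF σ.1 t * bdryF t γ.1) τ.1 := fun τ => rfl
  calc (∑ τ : Face n (j+1), bdry n j σ τ * bdry n (j+1) τ γ)
      = ∑ τ : Face n (j+1), (fun t => bdryF σ.1 t * bdryF t γ.1) τ.1 :=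
        Finset.sum_congr rfl fun τ _ => this τ
    _ = ∑ a ∈ γ.1, bdryF σ.1 (γ.1.erase a) * bdryF (γ.1.erase a) γ.1 := by
        exact sum_faces γ (fun t => bdryF σ.1 t * bdryF t γ.1)
          (fun τ' hτ' => by simp [bdryF_eq_zero hτ'])
    _ = 0 := by
        by_cases hs : σ.1 ⊆ γ.1
        · have hc2 : (γ.1 \ σ.1).card = 2 := by
            rw [Finset.card_sdiff_of_subset hs, σ.2, γ.2]; omega
          obtain ⟨i, j', hij, hpair⟩ := Finset.card_eq_two.mp hc2
          have hiγ : i ∈ γ.1 ∧ i ∉ σ.1 := by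
            have := hpair ▸ (Finset.mem_insert_self i {j'})
            exact Finset.mem_sdiff.mp this
          have hjγ : j' ∈ γ.1 ∧ j' ∉ σ.1 := by
            have : j' ∈ γ.1 \ σ.1 := by rw [hpair]; simp
            exact Finset.mem_sdiff.mp this
          have hσ : σ.1 = γ.1 \ {i, j'} := by
            rw [← hpair, Finset.sdiff_sdiff_self_left, Finset.inter_eq_right.mpr hs]
          have key1 : σ.1 = (γ.1.erase i).erase j' := by
            rw [hσ]; ext b
            simp only [Finset.mem_erase, Finset.mem_sdiff, Finset.mem_insert,
              Finset.mem_singleton]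
            tauto
          have key2 : σ.1 = (γ.1.erase j').erase i := by
            rw [hσ]; ext b
            simp only [Finset.mem_erase, Finset.mem_sdiff, Finset.mem_insert,
              Finset.mem_singleton]
            tauto
          have hsub : ({i, j'} : Finset (Fin n)) ⊆ γ.1 := by
            intro b hb
            rcases Finset.mem_insert.mp hb with h1 | h1
            · exact h1 ▸ hiγ.1
            · exact (Finset.mem_singleton.mp h1) ▸ hjγ.1
          rw [← Finset.sum_subset hsub]
          · rw [Finset.sum_pair hij,
              bdryF_apply (Finset.mem_erase.mpr ⟨hij.symm, hjγ.1⟩) key1,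
              bdryF_apply (Finset.mem_erase.mpr ⟨hij, hiγ.1⟩) key2,
              bdryF_apply hiγ.1 rfl, bdryF_apply hjγ.1 rfl]
            rcases lt_or_gt_of_ne (show (i : Fin n) ≠ j' from hij) with h | h
            · exact bb_sign hiγ.1 hjγ.1 h
            · have := bb_sign hjγ.1 hiγ.1 h
              linarith
          · intro a haγ hanot
            have haσ : a ∈ σ.1 := by
              rw [hσ, Finset.mem_sdiff]
              exact ⟨haγ, hanot⟩
            have : ¬ σ.1 ⊆ γ.1.erase a := fun hc =>
              (Finset.notMem_erase a γ.1) (hc haσ)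
            rw [bdryF_eq_zero this, zero_mul]
        · refine Finset.sum_eq_zero fun a ha => ?_
          have : ¬ σ.1 ⊆ γ.1.erase a := fun hc => hs (hc.trans (Finset.erase_subset a γ.1))
          rw [bdryF_eq_zero this, zero_mul]

end ProjAux
namespace ProjAux

variable {n : ℕ}

/-- the vertex-weighted incidence matrix. -/
noncomputable def W (j : ℕ) (x : Fin n → ℝ) : Matrix (Face n j) (Face n (j+1)) ℝ :=
  fun σ τ => (∏ i ∈ σ.1, x i)⁻¹ * bdryF σ.1 τ.1 * ∏ i ∈ τ.1, x i

lemma prodx_ne {x : Fin n → ℝ} (hx : ∀ i, x i ≠ 0) (s : Finset (Fin n)) :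
    ∏ i ∈ s, x i ≠ 0 :=
  Finset.prod_ne_zero_iff.mpr fun i _ => hx i

lemma sum_W_down {x : Fin n → ℝ} (hx : ∀ i, x i ≠ 0) {j : ℕ} (τ τ' : Face n (j+1)) :
    ∑ σ : Face n j, W j x σ τ * W j x σ τ'
      = ∑ a ∈ τ.1, ((∏ i ∈ τ.1.erase a, x i)⁻¹ * bdryF (τ.1.erase a) τ.1 * ∏ i ∈ τ.1, x i) *
          ((∏ i ∈ τ.1.erase a, x i)⁻¹ * bdryF (τ.1.erase a) τ'.1 * ∏ i ∈ τ'.1, x i) :=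
  sum_faces τ (fun s => ((∏ i ∈ s, x i)⁻¹ * bdryF s τ.1 * ∏ i ∈ τ.1, x i) *
      ((∏ i ∈ s, x i)⁻¹ * bdryF s τ'.1 * ∏ i ∈ τ'.1, x i))
    (fun σ hσ => by simp [bdryF_eq_zero hσ])

lemma sum_W_up {x : Fin n → ℝ} (hx : ∀ i, x i ≠ 0) {j : ℕ} (τ τ' : Face n (j+1)) :
    ∑ γ : Face n (j+2), W (j+1) x τ γ * W (j+1) x τ' γ
      = ∑ a ∈ τ.1ᶜ, ((∏ i ∈ τ.1, x i)⁻¹ * bdryF τ.1 (insert a τ.1) * ∏ i ∈ insert a τ.1, x i) *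
          ((∏ i ∈ τ'.1, x i)⁻¹ * bdryF τ'.1 (insert a τ.1) * ∏ i ∈ insert a τ.1, x i) :=
  sum_cofaces τ (fun t => ((∏ i ∈ τ.1, x i)⁻¹ * bdryF τ.1 t * ∏ i ∈ t, x i) *
      ((∏ i ∈ τ'.1, x i)⁻¹ * bdryF τ'.1 t * ∏ i ∈ t, x i))
    (fun γ hγ => by simp [bdryF_eq_zero hγ])

lemma sum_W_down_diag {x : Fin n → ℝ} (hx : ∀ i, x i ≠ 0) {j : ℕ} (τ : Face n (j+1)) :
    ∑ σ : Face n j, W j x σ τ * W j x σ τ = ∑ a ∈ τ.1, x a ^ 2 := by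
  rw [sum_W_down hx τ τ]
  refine Finset.sum_congr rfl fun a ha => ?_
  have hp : ∏ i ∈ τ.1.erase a, x i ≠ 0 := prodx_ne hx _
  rw [bdryF_apply ha rfl, ← Finset.mul_prod_erase _ x ha]
  rw [show ((∏ i ∈ τ.1.erase a, x i)⁻¹ * sgn τ.1 a * (x a * ∏ i ∈ τ.1.erase a, x i)) *
      ((∏ i ∈ τ.1.erase a, x i)⁻¹ * sgn τ.1 a * (x a * ∏ i ∈ τ.1.erase a, x i))
      = (sgn τ.1 a * sgn τ.1 a) * (x a * x a) *
        (((∏ i ∈ τ.1.erase a, x i)⁻¹ * ∏ i ∈ τ.1.erase a, x i) *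
         ((∏ i ∈ τ.1.erase a, x i)⁻¹ * ∏ i ∈ τ.1.erase a, x i)) from by ring,
    sgn_mul_self, inv_mul_cancel₀ hp]
  ring

lemma sum_W_up_diag {x : Fin n → ℝ} (hx : ∀ i, x i ≠ 0) {j : ℕ} (τ : Face n (j+1)) :
    ∑ γ : Face n (j+2), W (j+1) x τ γ * W (j+1) x τ γ = ∑ a ∈ τ.1ᶜ, x a ^ 2 := by
  rw [sum_W_up hx τ τ]
  refine Finset.sum_congr rfl fun a ha => ?_
  have hna : a ∉ τ.1 := Finset.mem_compl.mp ha
  have hp : ∏ i ∈ τ.1, x i ≠ 0 := prodx_ne hx _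
  rw [bdryF_apply (Finset.mem_insert_self a τ.1) (Finset.erase_insert hna).symm,
    Finset.prod_insert hna]
  rw [show ((∏ i ∈ τ.1, x i)⁻¹ * sgn (insert a τ.1) a * (x a * ∏ i ∈ τ.1, x i)) *
      ((∏ i ∈ τ.1, x i)⁻¹ * sgn (insert a τ.1) a * (x a * ∏ i ∈ τ.1, x i))
      = (sgn (insert a τ.1) a * sgn (insert a τ.1) a) * (x a * x a) *
        (((∏ i ∈ τ.1, x i)⁻¹ * ∏ i ∈ τ.1, x i) * ((∏ i ∈ τ.1, x i)⁻¹ * ∏ i ∈ τ.1, x i))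
      from by ring,
    sgn_mul_self, inv_mul_cancel₀ hp]
  ring

lemma alg_key {p xi xi' s1 s2 s3 s4 : ℝ} (hp : p ≠ 0) (h1 : xi ≠ 0) (h2 : xi' ≠ 0)
    (hs : s1 * s2 + s3 * s4 = 0) :
    (p⁻¹ * s1 * (xi * p)) * (p⁻¹ * s2 * (xi' * p)) +
      ((xi * p)⁻¹ * s3 * (xi' * (xi * p))) * ((xi' * p)⁻¹ * s4 * (xi' * (xi * p))) = 0 := by
  have c1 : p⁻¹ * p = 1 := inv_mul_cancel₀ hp
  have c2 : (xi * p)⁻¹ * (xi * p) = 1 := inv_mul_cancel₀ (mul_ne_zero h1 hp)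
  have c3 : (xi' * p)⁻¹ * (xi' * p) = 1 := inv_mul_cancel₀ (mul_ne_zero h2 hp)
  calc (p⁻¹ * s1 * (xi * p)) * (p⁻¹ * s2 * (xi' * p)) +
      ((xi * p)⁻¹ * s3 * (xi' * (xi * p))) * ((xi' * p)⁻¹ * s4 * (xi' * (xi * p)))
      = (s1 * s2 + s3 * s4) * (xi * xi') * ((p⁻¹ * p) * (p⁻¹ * p)) +
        s3 * s4 * (xi * xi') *
          (((xi * p)⁻¹ * (xi * p)) * ((xi' * p)⁻¹ * (xi' * p)) - (p⁻¹ * p) * (p⁻¹ * p)) := by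
        ring
    _ = 0 := by rw [hs, c1, c2, c3]; ring

/-- the key level identity `Wᵀ W + W' W'ᵀ = z • 1`. -/
lemma level_identity (x : Fin n → ℝ) (hx : ∀ i, x i ≠ 0) (j : ℕ) :
    (W j x)ᵀ * (W j x) + (W (j+1) x) * (W (j+1) x)ᵀ
      = (∑ i, x i ^ 2) • (1 : Matrix (Face n (j+1)) (Face n (j+1)) ℝ) := by
  ext τ τ'
  rw [Matrix.add_apply, Matrix.mul_apply, Matrix.mul_apply, Matrix.smul_apply,
    Matrix.one_apply]
  simp only [Matrix.transpose_apply]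
  by_cases h : τ = τ'
  · subst h
    rw [if_pos rfl, smul_eq_mul, mul_one, sum_W_down_diag hx τ, sum_W_up_diag hx τ,
      Finset.sum_add_sum_compl]
  · rw [if_neg h, smul_eq_mul, mul_zero]
    have hcards : τ'.1.card = τ.1.card := by rw [τ.2, τ'.2]
    have hnonempty : (τ.1 \ τ'.1).Nonempty := by
      rw [Finset.sdiff_nonempty]
      intro hsub
      exact h (Subtype.ext (Finset.eq_of_subset_of_card_le hsub (le_of_eq hcards)))
    have hcomm : (τ.1 \ τ'.1).card = (τ'.1 \ τ.1).card := Finset.card_sdiff_comm hcards.symm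
    by_cases hone : (τ.1 \ τ'.1).card = 1
    · -- the interesting case: τ and τ' share all but one vertex
      obtain ⟨i, hpi⟩ := Finset.card_eq_one.mp hone
      obtain ⟨i', hpi'⟩ := Finset.card_eq_one.mp (hcomm ▸ hone)
      have hi : i ∈ τ.1 ∧ i ∉ τ'.1 := Finset.mem_sdiff.mp (hpi ▸ Finset.mem_singleton_self i)
      have hi' : i' ∈ τ'.1 ∧ i' ∉ τ.1 :=
        Finset.mem_sdiff.mp (hpi' ▸ Finset.mem_singleton_self i')
      have hii' : i ≠ i' := fun hc => hi'.2 (hc ▸ hi.1)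
      have hτe : τ.1.erase i = τ.1 ∩ τ'.1 := by
        rw [Finset.erase_eq, ← hpi, Finset.sdiff_sdiff_self_left]
      have hτ'e : τ'.1.erase i' = τ.1 ∩ τ'.1 := by
        rw [Finset.erase_eq, ← hpi', Finset.sdiff_sdiff_self_left, Finset.inter_comm]
      have hee : τ.1.erase i = τ'.1.erase i' := hτe.trans hτ'e.symm
      set s0 := τ.1 ∩ τ'.1 with hs0
      have his0 : i ∉ s0 := fun hc => hi.2 (Finset.mem_inter.mp hc).2
      have hi's0 : i' ∉ s0 := fun hc => hi'.2 (Finset.mem_inter.mp hc).1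
      have hτs : τ.1 = insert i s0 := by rw [← hτe, Finset.insert_erase hi.1]
      have hτ's : τ'.1 = insert i' s0 := by rw [← hτ'e, Finset.insert_erase hi'.1]
      have hγeq : insert i' τ.1 = insert i τ'.1 := by
        rw [hτs, hτ's, Finset.insert_comm]
      -- first sum has a single nonzero term, at a = i
      rw [sum_W_down hx τ τ', sum_W_up hx τ τ']
      rw [Finset.sum_eq_single i, Finset.sum_eq_single i']
      · -- compute both terms
        have hb1 : bdryF (τ.1.erase i) τ.1 = sgn τ.1 i := bdryF_apply hi.1 rfl
        have hb2 : bdryF (τ.1.erase i) τ'.1 = sgn τ'.1 i' := bdryF_apply hi'.1 hee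
        have hb3 : bdryF τ.1 (insert i' τ.1) = sgn (insert i' τ.1) i' :=
          bdryF_apply (Finset.mem_insert_self i' τ.1) (Finset.erase_insert hi'.2).symm
        have hb4 : bdryF τ'.1 (insert i' τ.1) = sgn (insert i' τ.1) i := by
          rw [hγeq]
          exact bdryF_apply (Finset.mem_insert_self i τ'.1) (Finset.erase_insert hi.2).symm
        have hpτ : ∏ a ∈ τ.1, x a = x i * ∏ a ∈ τ.1.erase i, x a :=
          (Finset.mul_prod_erase _ x hi.1).symm
        have hpτ' : ∏ a ∈ τ'.1, x a = x i' * ∏ a ∈ τ.1.erase i, x a := by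
          rw [hee]; exact (Finset.mul_prod_erase _ x hi'.1).symm
        have hpγ : ∏ a ∈ insert i' τ.1, x a = x i' * ∏ a ∈ τ.1, x a :=
          Finset.prod_insert hi'.2
        have hpγ' : ∏ a ∈ insert i' τ.1, x a = x i * ∏ a ∈ τ'.1, x a := by
          rw [hγeq]; exact Finset.prod_insert hi.2
        have hp0 : (∏ a ∈ τ.1.erase i, x a) ≠ 0 := prodx_ne hx _
        have hpτne : (∏ a ∈ τ.1, x a) ≠ 0 := prodx_ne hx _
        have hpτ'ne : (∏ a ∈ τ'.1, x a) ≠ 0 := prodx_ne hx _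
        rw [hb1, hb2, hb3, hb4]
        have hsgn : sgn τ.1 i * sgn τ'.1 i' +
            sgn (insert i' τ.1) i' * sgn (insert i' τ.1) i = 0 := by
          have := lvl_sign his0 hi's0 hii'
          rwa [← hτs, ← hτ's] at this
        have hpγ2 : ∏ a ∈ insert i' τ.1, x a
            = x i' * (x i * ∏ a ∈ τ.1.erase i, x a) := by rw [hpγ, hpτ]
        rw [hpγ2, hpτ, hpτ']
        exact alg_key hp0 (hx i) (hx i') hsgn
      · -- other terms of the second sum vanish
        intro b hb hbne
        have hbτ : b ∉ τ.1 := Finset.mem_compl.mp hb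
        have : ¬ τ'.1 ⊆ insert b τ.1 := by
          intro hc
          rcases Finset.mem_insert.mp (hc hi'.1) with h1 | h1
          · exact hbne h1.symm
          · exact hi'.2 h1
        rw [bdryF_eq_zero this]
        ring
      · intro hc
        exact absurd (Finset.mem_compl.mpr hi'.2) hc
      · -- other terms of the first sum vanish
        intro b hb hbne
        have : ¬ τ.1.erase b ⊆ τ'.1 := by
          intro hc
          exact hi.2 (hc (Finset.mem_erase.mpr ⟨fun hc2 => hbne hc2.symm, hi.1⟩))
        rw [bdryF_eq_zero this]
        ring
      · intro hc
        exact absurd hi.1 hc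
    · -- the cardinality-mismatch case: everything vanishes
      rw [sum_W_down hx τ τ', sum_W_up hx τ τ']
      rw [Finset.sum_eq_zero, Finset.sum_eq_zero, add_zero]
      · intro a ha
        have hna : a ∉ τ.1 := Finset.mem_compl.mp ha
        have : ¬ τ'.1 ⊆ insert a τ.1 := by
          intro hc
          apply hone
          have hsub : τ'.1 \ τ.1 ⊆ {a} := by
            intro b hb
            rw [Finset.mem_sdiff] at hb
            rcases Finset.mem_insert.mp (hc hb.1) with h1 | h1
            · exact Finset.mem_singleton.mpr h1
            · exact absurd h1 hb.2
          have h1 : (τ'.1 \ τ.1).card ≤ 1 := by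
            calc (τ'.1 \ τ.1).card ≤ ({a} : Finset (Fin n)).card := Finset.card_le_card hsub
            _ = 1 := Finset.card_singleton a
          have h2 : 1 ≤ (τ.1 \ τ'.1).card := Finset.card_pos.mpr hnonempty
          omega
        rw [bdryF_eq_zero this]
        ring
      · intro a ha
        have : ¬ τ.1.erase a ⊆ τ'.1 := by
          intro hc
          apply hone
          have hsub : τ.1 \ τ'.1 ⊆ {a} := by
            intro b hb
            rw [Finset.mem_sdiff] at hb
            by_contra hba
            exact hb.2 (hc (Finset.mem_erase.mpr
              ⟨fun h2 => hba (h2 ▸ Finset.mem_singleton_self b), hb.1⟩))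
          have h1 : (τ.1 \ τ'.1).card ≤ 1 := by
            calc (τ.1 \ τ'.1).card ≤ ({a} : Finset (Fin n)).card := Finset.card_le_card hsub
            _ = 1 := Finset.card_singleton a
          have h2 : 1 ≤ (τ.1 \ τ'.1).card := Finset.card_pos.mpr hnonempty
          omega
        rw [bdryF_eq_zero this]
        ring

end ProjAux
namespace ProjAux

variable {n : ℕ}

lemma card_HFace (hn1 : 1 ≤ n) (k : ℕ) :
    Fintype.card (HFace n k) = (n-1).choose k := by
  classical
  have hw : n - 1 < n := by omega
  set w : Fin n := ⟨n-1, hw⟩ with hwdef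
  rw [Fintype.card_subtype]
  have hset : Finset.univ.filter
        (fun s : Finset (Fin n) => s.card = k ∧ ∀ a ∈ s, (a : ℕ) < n - 1)
      = (Finset.univ.erase w).powersetCard k := by
    ext s
    simp only [Finset.mem_filter, Finset.mem_univ, true_and, Finset.mem_powersetCard]
    constructor
    · rintro ⟨hc, hlt⟩
      refine ⟨fun a ha => Finset.mem_erase.mpr ⟨?_, Finset.mem_univ a⟩, hc⟩
      intro hc2
      have := hlt a ha
      rw [hc2] at this
      simp only [hwdef] at this
      omega
    · rintro ⟨hsub, hc⟩
      refine ⟨hc, fun a ha => ?_⟩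
      have h1 := Finset.mem_erase.mp (hsub ha)
      have h2 : (a : ℕ) < n := a.isLt
      have h3 : (a : ℕ) ≠ n - 1 := fun hc2 => h1.1 (Fin.ext (by simp [hwdef, hc2]))
      omega
  rw [hset, Finset.card_powersetCard, Finset.card_erase_of_mem (Finset.mem_univ w),
    Finset.card_univ, Fintype.card_fin]

lemma card_cofaces (k : ℕ) (i : Fin n) :
    (Finset.univ.filter (fun τ : Face n (k+1) => i ∈ τ.1)).card = (n-1).choose k := by
  classical
  have h : (Finset.univ.filter (fun τ : Face n (k+1) => i ∈ τ.1)).card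
      = ((Finset.univ.erase i).powersetCard k).card := by
    refine Finset.card_bij' (fun τ _ => τ.1.erase i)
      (fun s hs => (⟨insert i s, ?_⟩ : Face n (k+1))) ?_ ?_ ?_ ?_
    · -- card of insert
      rw [Finset.mem_powersetCard] at hs
      have : i ∉ s := fun hc => (Finset.mem_erase.mp (hs.1 hc)).1 rfl
      rw [Finset.card_insert_of_notMem this, hs.2]
    · intro τ hτ
      rw [Finset.mem_filter] at hτ
      rw [Finset.mem_powersetCard]
      refine ⟨fun b hb => Finset.mem_erase.mpr ⟨(Finset.mem_erase.mp hb).1, Finset.mem_univ b⟩, ?_⟩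
      rw [Finset.card_erase_of_mem hτ.2, τ.2]
      omega
    · intro s hs
      rw [Finset.mem_filter]
      exact ⟨Finset.mem_univ _, Finset.mem_insert_self i s⟩
    · intro τ hτ
      rw [Finset.mem_filter] at hτ
      exact Subtype.ext (Finset.insert_erase hτ.2)
    · intro s hs
      rw [Finset.mem_powersetCard] at hs
      have : i ∉ s := fun hc => (Finset.mem_erase.mp (hs.1 hc)).1 rfl
      exact Finset.erase_insert this
  rw [h, Finset.card_powersetCard, Finset.card_erase_of_mem (Finset.mem_univ i),
    Finset.card_univ, Fintype.card_fin]

lemma sum_deg_faces (k : ℕ) (x : Fin n → ℝ) :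
    ∑ τ : Face n (k+1), ∑ i ∈ τ.1, x i ^ 2
      = ((n-1).choose k : ℝ) * ∑ i, x i ^ 2 := by
  classical
  calc ∑ τ : Face n (k+1), ∑ i ∈ τ.1, x i ^ 2
      = ∑ τ : Face n (k+1), ∑ i : Fin n, (if i ∈ τ.1 then x i ^ 2 else 0) := by
        refine Finset.sum_congr rfl fun τ _ => ?_
        rw [← Finset.sum_filter, Finset.filter_mem_eq_inter, Finset.univ_inter]
    _ = ∑ i : Fin n, ∑ τ : Face n (k+1), (if i ∈ τ.1 then x i ^ 2 else 0) := Finset.sum_comm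
    _ = ∑ i : Fin n, ((n-1).choose k : ℝ) * x i ^ 2 := by
        refine Finset.sum_congr rfl fun i _ => ?_
        rw [← Finset.sum_filter, Finset.sum_const, card_cofaces k i, nsmul_eq_mul]
    _ = ((n-1).choose k : ℝ) * ∑ i, x i ^ 2 := by rw [← Finset.mul_sum]

end ProjAux
namespace ProjAux

variable {n : ℕ}

/-- the double-boundary sum vanishes. -/
lemma sum_bdryF {j : ℕ} (σ : Face n j) (γ : Face n (j+2)) :
    ∑ τ : Face n (j+1), bdryF σ.1 τ.1 * bdryF τ.1 γ.1 = 0 := by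
  have := congrFun (congrFun (bdry_mul_bdry (n := n) j) σ) γ
  rw [Matrix.mul_apply, Matrix.zero_apply] at this
  exact this

end ProjAux

open ProjAux

/-- the diagonal entries of `P^x` satisfy
`P^x(τ,τ) = z⁻¹ Σ_{i∈τ} xᵢ²`. -/
theorem projection_diagonal (n k : ℕ) (hk : 1 ≤ k) (hn : k < n)
    (x : Fin n → ℝ) (hx : ∀ i, x i ≠ 0) (τ : Face n (k+1)) :
    ((bdryHat n k * Xdiag n (k+1) x)ᵀ *
        (bdryHat n k * (Xdiag n (k+1) x * Xdiag n (k+1) x) * (bdryHat n k)ᵀ)⁻¹ *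
        (bdryHat n k * Xdiag n (k+1) x)) τ τ
      = (∑ i, x i ^ 2)⁻¹ * ∑ i ∈ τ.1, x i ^ 2 := by
  classical
  haveI : Nonempty (Fin n) := ⟨⟨0, by omega⟩⟩
  set z := ∑ i, x i ^ 2 with hzdef
  have hz : z ≠ 0 := by
    have hpos : 0 < z :=
      Finset.sum_pos (fun i _ => lt_of_le_of_ne (sq_nonneg _) (Ne.symm (pow_ne_zero 2 (hx i))))
        Finset.univ_nonempty
    exact ne_of_gt hpos
  set X := Xdiag n (k+1) x with hXdef
  set B := bdryHat n k with hBdef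
  set A := B * X with hAdef
  set L := B * (X * X) * Bᵀ with hLdef
  have hXT : Xᵀ = X := by rw [hXdef, Xdiag]; exact Matrix.diagonal_transpose _
  have hLA : L = A * Aᵀ := by
    rw [hLdef, hAdef, Matrix.transpose_mul, hXT]
    simp only [Matrix.mul_assoc]
  have hAentry : ∀ (σ : HFace n k) (τ' : Face n (k+1)),
      A σ τ' = bdryF σ.1 τ'.1 * ∏ i ∈ τ'.1, x i := by
    intro σ τ'
    rw [hAdef, hXdef, Xdiag, Matrix.mul_diagonal]
    rfl
  set N := W (k+1) x with hNdef
  set Q := N * Nᵀ with hQdef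
  clear_value X B A L N Q
  -- A * N = 0
  have hAN : A * N = 0 := by
    ext σ γ
    rw [Matrix.mul_apply, Matrix.zero_apply]
    have hterm : ∀ τ' : Face n (k+1), A σ τ' * N τ' γ
        = (bdryF σ.1 τ'.1 * bdryF τ'.1 γ.1) * ∏ i ∈ γ.1, x i := by
      intro τ'
      rw [hAentry σ τ', hNdef]
      show (bdryF σ.1 τ'.1 * ∏ i ∈ τ'.1, x i) *
        ((∏ i ∈ τ'.1, x i)⁻¹ * bdryF τ'.1 γ.1 * ∏ i ∈ γ.1, x i) = _
      rw [show (bdryF σ.1 τ'.1 * ∏ i ∈ τ'.1, x i) *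
          ((∏ i ∈ τ'.1, x i)⁻¹ * bdryF τ'.1 γ.1 * ∏ i ∈ γ.1, x i)
          = (bdryF σ.1 τ'.1 * bdryF τ'.1 γ.1 * ∏ i ∈ γ.1, x i) *
            ((∏ i ∈ τ'.1, x i) * (∏ i ∈ τ'.1, x i)⁻¹) from by ring,
        mul_inv_cancel₀ (prodx_ne hx _), mul_one]
    rw [Finset.sum_congr rfl (fun τ' _ => hterm τ'), ← Finset.sum_mul,
      sum_bdryF (⟨σ.1, σ.2.1⟩ : Face n k) γ, zero_mul]
  have hAQ : A * Q = 0 := by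
    rw [hQdef, ← Matrix.mul_assoc, hAN, Matrix.zero_mul]
  -- N * W (k+2) = 0
  have hNN2 : N * W (k+2) x = 0 := by
    ext τ' δ
    rw [Matrix.mul_apply, Matrix.zero_apply]
    have hterm : ∀ γ : Face n (k+2), N τ' γ * W (k+2) x γ δ
        = ((∏ i ∈ τ'.1, x i)⁻¹ * ∏ i ∈ δ.1, x i) * (bdryF τ'.1 γ.1 * bdryF γ.1 δ.1) := by
      intro γ
      rw [hNdef]
      show ((∏ i ∈ τ'.1, x i)⁻¹ * bdryF τ'.1 γ.1 * ∏ i ∈ γ.1, x i) *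
        ((∏ i ∈ γ.1, x i)⁻¹ * bdryF γ.1 δ.1 * ∏ i ∈ δ.1, x i) = _
      rw [show ((∏ i ∈ τ'.1, x i)⁻¹ * bdryF τ'.1 γ.1 * ∏ i ∈ γ.1, x i) *
          ((∏ i ∈ γ.1, x i)⁻¹ * bdryF γ.1 δ.1 * ∏ i ∈ δ.1, x i)
          = ((∏ i ∈ τ'.1, x i)⁻¹ * ∏ i ∈ δ.1, x i) * (bdryF τ'.1 γ.1 * bdryF γ.1 δ.1) *
            ((∏ i ∈ γ.1, x i) * (∏ i ∈ γ.1, x i)⁻¹) from by ring,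
        mul_inv_cancel₀ (prodx_ne hx _), mul_one]
    rw [Finset.sum_congr rfl (fun γ _ => hterm γ), ← Finset.mul_sum, sum_bdryF τ' δ, mul_zero]
  -- Q is z times a projection
  have hNtN : Nᵀ * N = z • 1 - W (k+2) x * (W (k+2) x)ᵀ := by
    rw [hNdef, hzdef]
    exact eq_sub_of_add_eq (level_identity x hx (k+1))
  have hQQ : Q * Q = z • Q := by
    have e1 : Q * Q = N * ((Nᵀ * N) * Nᵀ) := by
      rw [hQdef]; simp only [Matrix.mul_assoc]
    have e2 : N * ((W (k+2) x * (W (k+2) x)ᵀ) * Nᵀ) = 0 := by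
      rw [← Matrix.mul_assoc N _ Nᵀ, ← Matrix.mul_assoc N _ ((W (k+2) x)ᵀ), hNN2,
        Matrix.zero_mul, Matrix.zero_mul]
    rw [e1, hNtN, Matrix.sub_mul, Matrix.mul_sub, e2, sub_zero, Matrix.smul_mul,
      Matrix.one_mul, Matrix.mul_smul, ← hQdef]
  -- L is invertible
  have hdet : IsUnit L.det := by
    by_contra hcon
    have hdet0 : L.det = 0 := by rwa [isUnit_iff_ne_zero, not_not] at hcon
    obtain ⟨v, hvne, hv⟩ := (Matrix.exists_mulVec_eq_zero_iff).mpr hdet0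
    apply hvne
    have hAv : Aᵀ *ᵥ v = 0 := by
      have hdp : (Aᵀ *ᵥ v) ⬝ᵥ (Aᵀ *ᵥ v) = 0 := by
        calc (Aᵀ *ᵥ v) ⬝ᵥ (Aᵀ *ᵥ v) = (v ᵥ* A) ⬝ᵥ (Aᵀ *ᵥ v) := by rw [Matrix.mulVec_transpose]
          _ = v ⬝ᵥ (A *ᵥ (Aᵀ *ᵥ v)) := (Matrix.dotProduct_mulVec v A _).symm
          _ = v ⬝ᵥ ((A * Aᵀ) *ᵥ v) := by rw [Matrix.mulVec_mulVec]
          _ = v ⬝ᵥ (L *ᵥ v) := by rw [← hLA]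
          _ = 0 := by rw [hv, dotProduct_zero]
      exact dotProduct_self_eq_zero.mp hdp
    funext σ0
    have hw : n - 1 < n := by omega
    set w : Fin n := ⟨n-1, hw⟩ with hwdef
    have hwσ0 : w ∉ σ0.1 := by
      intro hc
      have := σ0.2.2 w hc
      simp only [hwdef] at this
      omega
    have hτcard : (insert w σ0.1).card = k+1 := by
      rw [Finset.card_insert_of_notMem hwσ0, σ0.2.1]
    set τ0 : Face n (k+1) := ⟨insert w σ0.1, hτcard⟩ with hτ0def
    have h3 : ∑ σ : HFace n k, A σ τ0 * v σ = 0 := by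
      have := congrFun hAv τ0
      simpa [Matrix.mulVec, dotProduct, Matrix.transpose_apply] using this
    rw [Finset.sum_eq_single σ0] at h3
    · have hb : bdryF σ0.1 τ0.1 = sgn τ0.1 w :=
        bdryF_apply (Finset.mem_insert_self w σ0.1) (Finset.erase_insert hwσ0).symm
      rw [hAentry σ0 τ0, hb] at h3
      rcases mul_eq_zero.mp h3 with h4 | h4
      · rcases mul_eq_zero.mp h4 with h5 | h5
        · exact absurd h5 (sgn_ne_zero _ _)
        · exact absurd h5 (prodx_ne hx _)
      · exact h4
    · intro σ _ hσne
      have hnsub : ¬ σ.1 ⊆ τ0.1 := by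
        intro hsub
        have hsub' : σ.1 ⊆ σ0.1 := by
          intro a ha
          rcases Finset.mem_insert.mp (hsub ha) with h1 | h1
          · exfalso
            have := σ.2.2 a ha
            rw [h1] at this
            simp only [hwdef] at this
            omega
          · exact h1
        have : σ.1 = σ0.1 := Finset.eq_of_subset_of_card_le hsub'
          (le_of_eq (σ0.2.1.trans σ.2.1.symm))
        exact hσne (Subtype.ext this)
      rw [hAentry σ τ0, bdryF_eq_zero hnsub, zero_mul, zero_mul]
    · intro hcon2
      exact absurd (Finset.mem_univ σ0) hcon2
  have hLiL : L⁻¹ * L = 1 := Matrix.nonsing_inv_mul L hdet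
  have hLLi : L * L⁻¹ = 1 := Matrix.mul_nonsing_inv L hdet
  -- the two projections
  set P := Aᵀ * L⁻¹ * A with hPdef
  set G := (1 : Matrix (Face n (k+1)) (Face n (k+1)) ℝ) - z⁻¹ • Q with hGdef
  clear_value P G
  have hLsymm : Lᵀ = L := by
    rw [hLA, Matrix.transpose_mul, Matrix.transpose_transpose]
  have hPsymm : Pᵀ = P := by
    rw [hPdef, Matrix.transpose_mul, Matrix.transpose_mul, Matrix.transpose_transpose,
      Matrix.transpose_nonsing_inv, hLsymm, Matrix.mul_assoc]
  have hQsymm : Qᵀ = Q := by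
    rw [hQdef, Matrix.transpose_mul, Matrix.transpose_transpose]
  have hGsymm : Gᵀ = G := by
    rw [hGdef, Matrix.transpose_sub, Matrix.transpose_one, Matrix.transpose_smul, hQsymm]
  have hAG : A * G = A := by
    rw [hGdef, Matrix.mul_sub, Matrix.mul_one, Matrix.mul_smul, hAQ, smul_zero, sub_zero]
  have hGAt : G * Aᵀ = Aᵀ := by
    have := congrArg Matrix.transpose hAG
    rwa [Matrix.transpose_mul, hGsymm] at this
  have hPP : P * P = P := by
    rw [hPdef]
    calc (Aᵀ * L⁻¹ * A) * (Aᵀ * L⁻¹ * A)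
        = Aᵀ * (L⁻¹ * (A * (Aᵀ * (L⁻¹ * A)))) := by simp only [Matrix.mul_assoc]
      _ = Aᵀ * (L⁻¹ * ((A * Aᵀ) * (L⁻¹ * A))) := by simp only [Matrix.mul_assoc]
      _ = Aᵀ * (L⁻¹ * (L * (L⁻¹ * A))) := by rw [← hLA]
      _ = Aᵀ * (((L⁻¹ * L) * L⁻¹) * A) := by simp only [Matrix.mul_assoc]
      _ = Aᵀ * L⁻¹ * A := by rw [hLiL, Matrix.one_mul, ← Matrix.mul_assoc]
  have hPG : P * G = P := by
    rw [hPdef, Matrix.mul_assoc (Aᵀ * L⁻¹) A G, hAG]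
  have hGP : G * P = P := by
    rw [hPdef, ← Matrix.mul_assoc G (Aᵀ * L⁻¹) A, ← Matrix.mul_assoc G Aᵀ L⁻¹, hGAt]
  have hGG : G * G = G := by
    have hcz : z⁻¹ • (z⁻¹ • (z • Q)) = z⁻¹ • Q := by
      rw [smul_smul, smul_smul, mul_assoc, inv_mul_cancel₀ hz, mul_one]
    rw [hGdef, Matrix.sub_mul, Matrix.one_mul, Matrix.mul_sub, Matrix.mul_one,
      Matrix.smul_mul, Matrix.mul_smul, hQQ, hcz, sub_self, sub_zero]
  -- diagonal entries of Q
  have hQdiag : ∀ τ' : Face n (k+1), Q τ' τ' = z - ∑ i ∈ τ'.1, x i ^ 2 := by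
    intro τ'
    rw [hQdef, Matrix.mul_apply]
    have hterm : ∀ γ : Face n (k+2), N τ' γ * Nᵀ γ τ' = W (k+1) x τ' γ * W (k+1) x τ' γ := by
      intro γ; rw [hNdef, Matrix.transpose_apply]
    rw [Finset.sum_congr rfl (fun γ _ => hterm γ), sum_W_up_diag hx τ']
    exact eq_sub_of_add_eq (Finset.sum_compl_add_sum τ'.1 _)
  -- traces
  have htrQ : Matrix.trace Q
      = (Fintype.card (Face n (k+1)) : ℝ) * z - ((n-1).choose k : ℝ) * z := by
    rw [Matrix.trace]
    calc ∑ τ', Matrix.diag Q τ'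
        = ∑ τ' : Face n (k+1), (z - ∑ i ∈ τ'.1, x i ^ 2) :=
          Finset.sum_congr rfl fun τ' _ => hQdiag τ'
      _ = _ := by
          rw [Finset.sum_sub_distrib, Finset.sum_const, Finset.card_univ, nsmul_eq_mul,
            sum_deg_faces k x, ← hzdef]
  have htrG : Matrix.trace G = ((n-1).choose k : ℝ) := by
    rw [hGdef, Matrix.trace_sub, Matrix.trace_smul, Matrix.trace_one, htrQ, smul_eq_mul]
    field_simp
    ring
  have hn1 : 1 ≤ n := by omega
  have htrP : Matrix.trace P = ((n-1).choose k : ℝ) := by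
    rw [hPdef, Matrix.trace_mul_comm (Aᵀ * L⁻¹) A, ← Matrix.mul_assoc, ← hLA, hLLi,
      Matrix.trace_one]
    rw [card_HFace hn1 k]
  set H := G - P with hHdef
  clear_value H
  have hHsymm : Hᵀ = H := by rw [hHdef, Matrix.transpose_sub, hGsymm, hPsymm]
  have hHH : H * H = H := by
    rw [hHdef, Matrix.sub_mul, Matrix.mul_sub, Matrix.mul_sub, hGG, hGP, hPG, hPP]
    abel
  have htrH : ∑ σ, H σ σ = 0 := by
    have : Matrix.trace H = 0 := by rw [hHdef, Matrix.trace_sub, htrG, htrP, sub_self]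
    simpa [Matrix.trace, Matrix.diag] using this
  have hHdiag : ∀ σ, H σ σ = ∑ j, (H σ j)^2 := by
    intro σ
    conv_lhs => rw [← hHH]
    rw [Matrix.mul_apply]
    refine Finset.sum_congr rfl fun j _ => ?_
    have hsy : H j σ = H σ j := by
      calc H j σ = Hᵀ σ j := (Matrix.transpose_apply H σ j).symm
        _ = H σ j := by rw [hHsymm]
    rw [hsy]; ring
  have hHτ : H τ τ = 0 := by
    have hnn : ∀ σ ∈ Finset.univ, (0:ℝ) ≤ H σ σ := fun σ _ =>
      (hHdiag σ) ▸ Finset.sum_nonneg (fun j _ => sq_nonneg _)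
    exact (Finset.sum_eq_zero_iff_of_nonneg hnn).mp htrH τ (Finset.mem_univ τ)
  have hPτ : P τ τ = G τ τ := by
    have h1 : G τ τ - P τ τ = 0 := by
      have := hHτ
      rwa [hHdef, Matrix.sub_apply] at this
    linarith
  rw [hPτ, hGdef, Matrix.sub_apply, Matrix.one_apply_eq, Matrix.smul_apply, smul_eq_mul,
    hQdiag τ]
  field_simp
  ring
end

section
/- The matrix ∂̂ ∂̂ᵗ is invertible over ℚ (equivalently over ℝ), and ∂̂ᵗ (∂̂ ∂̂ᵗ)⁻¹ ∂̂ = n⁻¹ · ∂ᵗ ∂; that is, the orthogonal projection onto the row space of ∂̂ equals n⁻¹ ∂ᵗ∂. -/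
open Matrix

namespace BdryAux
variable {n : ℕ}

variable {n : ℕ}

noncomputable def eps (a : Fin n) (s : Finset (Fin n)) : ℝ :=
  (-1) ^ (s.filter (fun b => b < a)).card

noncomputable def bd (σ τ : Finset (Fin n)) : ℝ :=
  ∑ a ∈ τ, if σ = τ.erase a then eps a τ else 0

lemma bdry_eq (n k : ℕ) (σ : Face n k) (τ : Face n (k+1)) :
    bdry n k σ τ = bd σ.1 τ.1 := rfl

lemma bdryHat_eq (n k : ℕ) (σ : HFace n k) (τ : Face n (k+1)) :
    bdryHat n k σ τ = bd σ.1 τ.1 := rfl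

lemma eps_sq (a : Fin n) (s : Finset (Fin n)) : eps a s * eps a s = 1 := by
  rw [eps, ← pow_add, ← two_mul, pow_mul]; norm_num

lemma filter_erase_card (a b : Fin n) (s : Finset (Fin n)) (hb : b ∈ s) :
    ((s.erase b).filter (fun x => x < a)).card
      = (s.filter (fun x => x < a)).card - (if b < a then 1 else 0) := by
  rw [Finset.filter_erase]
  split
  · rw [Finset.card_erase_of_mem (Finset.mem_filter.2 ⟨hb, by assumption⟩)]
  · have hnb : b ∉ Finset.filter (fun x => x < a) s := by
      simp only [Finset.mem_filter]; tauto
    rw [Finset.erase_eq_of_notMem hnb]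
    simp

lemma eps_erase_of_lt (a b : Fin n) (ρ : Finset (Fin n)) (hb : b ∈ ρ) (h : a < b) :
    eps a (ρ.erase b) = eps a ρ := by
  rw [eps, eps, filter_erase_card a b ρ hb, if_neg (by exact fun hh => absurd h (asymm hh))]
  simp

lemma eps_erase_of_gt (a b : Fin n) (ρ : Finset (Fin n)) (hb : b ∈ ρ) (h : b < a) :
    eps a (ρ.erase b) = -eps a ρ := by
  rw [eps, eps, filter_erase_card a b ρ hb, if_pos h]
  have h1 : 1 ≤ (ρ.filter (fun x => x < a)).card :=
    Finset.card_pos.2 ⟨b, Finset.mem_filter.2 ⟨hb, h⟩⟩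
  obtain ⟨c, hc⟩ := Nat.exists_eq_add_of_le h1
  rw [hc]
  simp only [Nat.add_sub_cancel_left, pow_add, pow_one]
  ring

lemma eps_mul_eps (a b : Fin n) (ρ : Finset (Fin n)) (ha : a ∈ ρ) (hb : b ∈ ρ) (hab : a ≠ b) :
    eps a (ρ.erase b) * eps b ρ = -(eps b (ρ.erase a) * eps a ρ) := by
  rcases lt_or_gt_of_ne hab with h | h
  · rw [eps_erase_of_lt a b ρ hb h, eps_erase_of_gt b a ρ ha h]; ring
  · rw [eps_erase_of_gt a b ρ hb h, eps_erase_of_lt b a ρ ha h]; ring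

lemma eps_mul_eps' (a b : Fin n) (ρ : Finset (Fin n)) (ha : a ∈ ρ) (hb : b ∈ ρ) (hab : a ≠ b) :
    eps a (ρ.erase b) * eps b (ρ.erase a) = -(eps a ρ * eps b ρ) := by
  rcases lt_or_gt_of_ne hab with h | h
  · rw [eps_erase_of_lt a b ρ hb h, eps_erase_of_gt b a ρ ha h]; ring
  · rw [eps_erase_of_gt a b ρ hb h, eps_erase_of_lt b a ρ ha h]; ring



lemma sum_face_ite {j : ℕ} (X : Finset (Fin n)) (hX : X.card = j) (f : Finset (Fin n) → ℝ) :
    (∑ σ : Face n j, if σ.1 = X then f σ.1 else 0) = f X := by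
  rw [Fintype.sum_eq_single (⟨X, hX⟩ : Face n j)]
  · simp
  · intro σ hσ
    rw [if_neg (fun h => hσ (Subtype.ext h))]

lemma sum_erase_eq_sum_ite {α : Type*} [DecidableEq α] (s : Finset α) (b : α) (f : α → ℝ) :
    ∑ a ∈ s.erase b, f a = ∑ a ∈ s, if a ≠ b then f a else 0 := by
  rw [← Finset.sum_filter, Finset.filter_ne']

lemma bdry_mul_bdry (n j : ℕ) : bdry n j * bdry n (j+1) = 0 := by
  ext σ ρ
  rw [Matrix.mul_apply, Matrix.zero_apply]
  have step1 : ∀ τ : Face n (j+1), bdry n j σ τ * bdry n (j+1) τ ρ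
      = ∑ b ∈ ρ.1, if τ.1 = ρ.1.erase b then bd σ.1 τ.1 * eps b ρ.1 else 0 := by
    intro τ
    rw [bdry_eq, bdry_eq]
    show bd _ _ * (∑ b ∈ ρ.1, if τ.1 = ρ.1.erase b then eps b ρ.1 else 0) = _
    rw [Finset.mul_sum]
    refine Finset.sum_congr rfl fun b hb => ?_
    split <;> ring
  simp_rw [step1]
  rw [Finset.sum_comm]
  have step2 : ∀ b ∈ ρ.1,
      (∑ τ : Face n (j+1), if τ.1 = ρ.1.erase b then bd σ.1 τ.1 * eps b ρ.1 else 0)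
      = bd σ.1 (ρ.1.erase b) * eps b ρ.1 := by
    intro b hb
    have hc : (ρ.1.erase b).card = j+1 := by
      rw [Finset.card_erase_of_mem hb, ρ.2]
      omega
    exact sum_face_ite _ hc (fun t => bd σ.1 t * eps b ρ.1)
  rw [Finset.sum_congr rfl step2]
  -- now: ∑ b ∈ ρ, bd σ (ρ.erase b) * eps b ρ = 0
  have expand : ∀ b ∈ ρ.1, bd σ.1 (ρ.1.erase b) * eps b ρ.1
      = ∑ a ∈ ρ.1, (if a ≠ b ∧ σ.1 = (ρ.1.erase b).erase a then eps a (ρ.1.erase b) * eps b ρ.1 else 0) := by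
    intro b hb
    rw [bd, Finset.sum_mul, sum_erase_eq_sum_ite]
    refine Finset.sum_congr rfl fun a ha => ?_
    by_cases h1 : a ≠ b
    · rw [if_pos h1]
      by_cases h2 : σ.1 = (ρ.1.erase b).erase a
      · rw [if_pos h2, if_pos ⟨h1, h2⟩]
      · rw [if_neg h2, if_neg (fun hh => h2 hh.2), zero_mul]
    · rw [if_neg h1, if_neg (fun hh => h1 hh.1)]
  rw [Finset.sum_congr rfl expand, ← Finset.sum_product']
  apply Finset.sum_involution (fun p _ => (p.2, p.1))
  · intro ⟨b, a⟩ hp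
    simp only at *
    by_cases hab : a = b
    · subst hab
      simp
    · have hmem := Finset.mem_product.1 hp
      by_cases hσ : σ.1 = (ρ.1.erase b).erase a
      · rw [if_pos ⟨hab, hσ⟩, if_pos ⟨fun h => hab h.symm, by rw [Finset.erase_right_comm]; exact hσ⟩]
        rw [eps_mul_eps a b ρ.1 hmem.2 hmem.1 hab]
        ring
      · rw [if_neg (fun h => hσ h.2),
          if_neg (fun h => hσ (by rw [Finset.erase_right_comm]; exact h.2))]
        simp
  · intro ⟨b, a⟩ hp hne
    intro heq
    have hab : a = b := (Prod.ext_iff.1 heq).1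
    exact hne (if_neg (fun hh => hh.1 hab))
  · intro ⟨b, a⟩ hp
    have hmem := Finset.mem_product.1 hp
    exact Finset.mem_product.2 ⟨hmem.2, hmem.1⟩
  · intro p hp
    rfl


/-- erase cancellation: if `s.erase a = t.erase a` with `a` in both, then `s = t`. -/
lemma erase_eq_erase {s t : Finset (Fin n)} {a : Fin n} (ha : a ∈ s) (ha' : a ∈ t)
    (h : s.erase a = t.erase a) : s = t := by
  rw [← Finset.insert_erase ha, h, Finset.insert_erase ha']

lemma sum_face_cofacet {j : ℕ} (τ : Finset (Fin n)) (hτ : τ.card = j) (b : Fin n)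
    (f : Finset (Fin n) → ℝ) :
    (∑ ρ : Face n (j+1), if b ∈ ρ.1 ∧ τ = ρ.1.erase b then f ρ.1 else 0)
      = if b ∉ τ then f (insert b τ) else 0 := by
  by_cases hb : b ∈ τ
  · rw [if_neg (by simpa using hb)]
    apply Finset.sum_eq_zero
    intro ρ _
    rw [if_neg]
    rintro ⟨h1, h2⟩
    exact (Finset.notMem_erase b ρ.1) (h2 ▸ hb)
  · rw [if_pos (by simpa using hb)]
    have hc : (insert b τ).card = j+1 := by
      rw [Finset.card_insert_of_notMem hb, hτ]
    rw [Fintype.sum_eq_single (⟨insert b τ, hc⟩ : Face n (j+1))]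
    · rw [if_pos ⟨Finset.mem_insert_self _ _, (Finset.erase_insert hb).symm⟩]
    · intro ρ hρ
      rw [if_neg]
      rintro ⟨h1, h2⟩
      refine hρ (Subtype.ext ?_)
      show ρ.1 = insert b τ
      rw [h2, Finset.insert_erase h1]

/-- first piece: `(∂ᵀ∂)_{τ,τ'}` as a double sum over vertices. -/
lemma T1_eq (j : ℕ) (τ τ' : Face n (j+1)) :
    ((bdry n j)ᵀ * bdry n j) τ τ'
      = ∑ a ∈ τ.1, ∑ a' ∈ τ'.1,
          if τ.1.erase a = τ'.1.erase a' then eps a τ.1 * eps a' τ'.1 else 0 := by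
  rw [Matrix.mul_apply]
  have step : ∀ σ : Face n j, (bdry n j)ᵀ τ σ * bdry n j σ τ'
      = ∑ a ∈ τ.1, ∑ a' ∈ τ'.1,
          (if σ.1 = τ.1.erase a ∧ σ.1 = τ'.1.erase a' then eps a τ.1 * eps a' τ'.1 else 0) := by
    intro σ
    rw [Matrix.transpose_apply, bdry_eq, bdry_eq, bd, bd, Finset.sum_mul_sum]
    refine Finset.sum_congr rfl fun a ha => Finset.sum_congr rfl fun a' ha' => ?_
    by_cases h1 : σ.1 = τ.1.erase a
    · by_cases h2 : σ.1 = τ'.1.erase a'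
      · rw [if_pos h1, if_pos h2, if_pos ⟨h1, h2⟩]
      · rw [if_pos h1, if_neg h2, if_neg (fun h => h2 h.2), mul_zero]
    · rw [if_neg h1, zero_mul, if_neg (fun h : _ ∧ _ => h1 h.1)]
  rw [Finset.sum_congr rfl (fun σ _ => step σ)]
  rw [Finset.sum_comm]
  refine Finset.sum_congr rfl fun a ha => ?_
  rw [Finset.sum_comm]
  refine Finset.sum_congr rfl fun a' ha' => ?_
  have hc : (τ.1.erase a).card = j := by
    rw [Finset.card_erase_of_mem ha, τ.2]
    omega
  have : ∀ σ : Face n j,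
      (if σ.1 = τ.1.erase a ∧ σ.1 = τ'.1.erase a' then eps a τ.1 * eps a' τ'.1 else 0)
      = (if σ.1 = τ.1.erase a then
          (if τ.1.erase a = τ'.1.erase a' then eps a τ.1 * eps a' τ'.1 else 0) else 0) := by
    intro σ
    by_cases h1 : σ.1 = τ.1.erase a
    · by_cases h2 : σ.1 = τ'.1.erase a'
      · rw [if_pos ⟨h1, h2⟩, if_pos h1, if_pos (h1 ▸ h2)]
      · rw [if_neg (fun h : _ ∧ _ => h2 h.2), if_pos h1, if_neg (fun h => h2 (h1.trans h))]
    · rw [if_neg (fun h : _ ∧ _ => h1 h.1), if_neg h1]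
  rw [Finset.sum_congr rfl (fun σ _ => this σ),
    sum_face_ite _ hc (fun _ => if τ.1.erase a = τ'.1.erase a' then eps a τ.1 * eps a' τ'.1 else 0)]

/-- second piece: `(∂'∂'ᵀ)_{τ,τ'}` as a sum over cofacets. -/
lemma T2_eq (j : ℕ) (τ τ' : Face n (j+1)) :
    (bdry n (j+1) * (bdry n (j+1))ᵀ) τ τ'
      = ∑ b : Fin n, if b ∉ τ.1 then
          eps b (insert b τ.1) * bd τ'.1 (insert b τ.1) else 0 := by
  rw [Matrix.mul_apply]
  have step : ∀ ρ : Face n (j+1+1), bdry n (j+1) τ ρ * (bdry n (j+1))ᵀ ρ τ'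
      = ∑ b : Fin n, (if b ∈ ρ.1 ∧ τ.1 = ρ.1.erase b then eps b ρ.1 * bd τ'.1 ρ.1 else 0) := by
    intro ρ
    rw [Matrix.transpose_apply, bdry_eq, bdry_eq, bd, Finset.sum_mul]
    have hrhs : (∑ b : Fin n,
        if b ∈ ρ.1 ∧ τ.1 = ρ.1.erase b then eps b ρ.1 * bd τ'.1 ρ.1 else 0)
        = ∑ b ∈ ρ.1, (if τ.1 = ρ.1.erase b then eps b ρ.1 * bd τ'.1 ρ.1 else 0) := by
      have e1 : ∀ b : Fin n, (if b ∈ ρ.1 ∧ τ.1 = ρ.1.erase b then eps b ρ.1 * bd τ'.1 ρ.1 else 0)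
          = if b ∈ ρ.1 then (if τ.1 = ρ.1.erase b then eps b ρ.1 * bd τ'.1 ρ.1 else 0) else 0 := by
        intro b
        by_cases hb : b ∈ ρ.1
        · rw [if_pos hb]
          by_cases h1 : τ.1 = ρ.1.erase b
          · rw [if_pos h1, if_pos ⟨hb, h1⟩]
          · rw [if_neg h1, if_neg (fun h : _ ∧ _ => h1 h.2)]
        · rw [if_neg hb, if_neg (fun h : _ ∧ _ => hb h.1)]
      rw [Finset.sum_congr rfl (fun b _ => e1 b), Finset.sum_ite_mem, Finset.univ_inter]
    rw [hrhs]
    refine Finset.sum_congr rfl fun b _ => ?_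
    split <;> ring
  rw [Finset.sum_congr rfl (fun ρ _ => step ρ), Finset.sum_comm]
  refine Finset.sum_congr rfl fun b _ => ?_
  have := sum_face_cofacet τ.1 τ.2 b (fun ρ => eps b ρ * bd τ'.1 ρ)
  rw [this]
lemma lap (n j : ℕ) :
    (bdry n j)ᵀ * bdry n j + bdry n (j+1) * (bdry n (j+1))ᵀ
      = (n : ℝ) • (1 : Matrix (Face n (j+1)) (Face n (j+1)) ℝ) := by
  ext τ τ'
  rw [Matrix.add_apply, T1_eq, T2_eq, Matrix.smul_apply]
  by_cases hd : τ = τ'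
  · subst hd
    rw [Matrix.one_apply_eq, smul_eq_mul, mul_one]
    have hle : j + 1 ≤ n := by
      have := Finset.card_le_univ τ.1
      rwa [τ.2, Fintype.card_fin] at this
    have hT1 : (∑ a ∈ τ.1, ∑ a' ∈ τ.1,
        if τ.1.erase a = τ.1.erase a' then eps a τ.1 * eps a' τ.1 else 0) = ((j:ℝ)+1) := by
      have inner : ∀ a ∈ τ.1, (∑ a' ∈ τ.1,
          if τ.1.erase a = τ.1.erase a' then eps a τ.1 * eps a' τ.1 else 0) = 1 := by
        intro a ha
        rw [Finset.sum_eq_single a]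
        · rw [if_pos rfl, eps_sq]
        · intro a' ha' hne
          rw [if_neg]
          intro h
          exact absurd (h ▸ Finset.mem_erase.2 ⟨hne, ha'⟩) (Finset.notMem_erase a' τ.1)
        · intro h
          exact absurd ha h
      rw [Finset.sum_congr rfl inner, Finset.sum_const, τ.2, nsmul_eq_mul, mul_one]
      push_cast
      ring
    have hbd : ∀ b, b ∉ τ.1 → bd τ.1 (insert b τ.1) = eps b (insert b τ.1) := by
      intro b hb
      rw [bd, Finset.sum_insert hb, if_pos (Finset.erase_insert hb).symm]
      have z : ∀ a ∈ τ.1, (if τ.1 = (insert b τ.1).erase a then eps a (insert b τ.1) else 0) = 0 := by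
        intro a ha
        rw [if_neg]
        intro h
        have hbmem : b ∈ (insert b τ.1).erase a :=
          Finset.mem_erase.2 ⟨fun hba => hb (hba ▸ ha), Finset.mem_insert_self b τ.1⟩
        rw [← h] at hbmem
        exact hb hbmem
      rw [Finset.sum_congr rfl z, Finset.sum_const_zero, add_zero]
    have hT2 : (∑ b : Fin n, if b ∉ τ.1 then
        eps b (insert b τ.1) * bd τ.1 (insert b τ.1) else 0) = (n:ℝ) - ((j:ℝ)+1) := by
      have e1 : ∀ b : Fin n, (if b ∉ τ.1 then
          eps b (insert b τ.1) * bd τ.1 (insert b τ.1) else 0)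
          = if b ∉ τ.1 then (1:ℝ) else 0 := by
        intro b
        by_cases hb : b ∉ τ.1
        · rw [if_pos hb, if_pos hb, hbd b hb, eps_sq]
        · rw [if_neg hb, if_neg hb]
      rw [Finset.sum_congr rfl (fun b _ => e1 b), Finset.sum_boole]
      have : Finset.univ.filter (fun b => b ∉ τ.1) = τ.1ᶜ := by
        ext x; simp
      rw [this, Finset.card_compl, τ.2, Fintype.card_fin, Nat.cast_sub hle]
      push_cast
      ring
    rw [hT1, hT2]
    ring
  · rw [Matrix.one_apply_ne hd, smul_zero]
    have hdd : τ.1 ≠ τ'.1 := fun h => hd (Subtype.ext h)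
    have hcardeq : τ.1.card = τ'.1.card := by rw [τ.2, τ'.2]
    by_cases hone : (τ.1 \ τ'.1).card = 1
    · obtain ⟨a₀, ha₀⟩ := Finset.card_eq_one.1 hone
      have hcards : (τ'.1 \ τ.1).card = 1 := by
        rw [← Finset.card_sdiff_comm hcardeq, hone]
      obtain ⟨a₀', ha₀'⟩ := Finset.card_eq_one.1 hcards
      have ha₀mem : a₀ ∈ τ.1 ∧ a₀ ∉ τ'.1 :=
        Finset.mem_sdiff.1 (ha₀ ▸ Finset.mem_singleton_self a₀)
      have ha₀'mem : a₀' ∈ τ'.1 ∧ a₀' ∉ τ.1 :=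
        Finset.mem_sdiff.1 (ha₀' ▸ Finset.mem_singleton_self a₀')
      have hane : a₀ ≠ a₀' := fun h => ha₀mem.2 (h ▸ ha₀'mem.1)
      have herase : τ.1.erase a₀ = τ'.1.erase a₀' := by
        rw [Finset.erase_eq, Finset.erase_eq, ← ha₀, ← ha₀',
          Finset.sdiff_sdiff_self_left, Finset.sdiff_sdiff_self_left, Finset.inter_comm]
      set ρ := insert a₀' τ.1 with hρdef
      have hτρ : τ.1 = ρ.erase a₀' := (Finset.erase_insert ha₀'mem.2).symm
      have hτ'ρ : τ'.1 = ρ.erase a₀ := by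
        rw [hρdef, Finset.erase_insert_of_ne (Ne.symm hane), herase,
          Finset.insert_erase ha₀'mem.1]
      have ha₀ρ : a₀ ∈ ρ := Finset.mem_insert_of_mem ha₀mem.1
      have ha₀'ρ : a₀' ∈ ρ := Finset.mem_insert_self _ _
      have hT1 : (∑ a ∈ τ.1, ∑ a' ∈ τ'.1,
          if τ.1.erase a = τ'.1.erase a' then eps a τ.1 * eps a' τ'.1 else 0)
          = eps a₀ τ.1 * eps a₀' τ'.1 := by
        rw [Finset.sum_eq_single a₀]
        · rw [Finset.sum_eq_single a₀']
          · rw [if_pos herase]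
          · intro a' ha' hne
            rw [if_neg]
            intro h
            have : a' ∈ τ'.1.erase a₀' := Finset.mem_erase.2 ⟨hne, ha'⟩
            rw [← herase, h] at this
            exact (Finset.notMem_erase a' τ'.1) this
          · intro h
            exact absurd ha₀'mem.1 h
        · intro a ha hne
          apply Finset.sum_eq_zero
          intro a' ha'
          rw [if_neg]
          intro h
          by_cases haa : a = a'
          · subst haa
            exact hdd (erase_eq_erase ha (ha' : a ∈ τ'.1) h)
          · have hanotin : a ∉ τ'.1 := by
              intro hin
              have : a ∈ τ'.1.erase a' := Finset.mem_erase.2 ⟨haa, hin⟩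
              rw [← h] at this
              exact (Finset.notMem_erase a τ.1) this
            have : a ∈ τ.1 \ τ'.1 := Finset.mem_sdiff.2 ⟨ha, hanotin⟩
            rw [ha₀] at this
            exact hne (Finset.mem_singleton.1 this)
        · intro h
          exact absurd ha₀mem.1 h
      have hT2 : (∑ b : Fin n, if b ∉ τ.1 then
          eps b (insert b τ.1) * bd τ'.1 (insert b τ.1) else 0)
          = eps a₀' ρ * eps a₀ ρ := by
        rw [Fintype.sum_eq_single a₀']
        · rw [if_pos ha₀'mem.2, ← hρdef]
          congr 1
          rw [bd, Finset.sum_eq_single a₀]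
          · rw [if_pos hτ'ρ]
          · intro b' hb' hne
            rw [if_neg]
            intro h
            have : a₀ ∈ ρ.erase b' := Finset.mem_erase.2 ⟨Ne.symm hne, ha₀ρ⟩
            rw [← h] at this
            exact ha₀mem.2 this
          · intro h
            exact absurd ha₀ρ h
        · intro b hb
          by_cases hbτ : b ∉ τ.1
          · rw [if_pos hbτ]
            have : bd τ'.1 (insert b τ.1) = 0 := by
              rw [bd]
              apply Finset.sum_eq_zero
              intro b' hb'
              rw [if_neg]
              intro h
              have : a₀' ∈ insert b τ.1 :=
                Finset.mem_of_mem_erase (h ▸ ha₀'mem.1)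
              rcases Finset.mem_insert.1 this with h1 | h1
              · exact hb h1.symm
              · exact ha₀'mem.2 h1
            rw [this, mul_zero]
          · rw [if_neg hbτ]
      rw [hT1, hT2, hτρ, hτ'ρ, eps_mul_eps' a₀ a₀' ρ ha₀ρ ha₀'ρ hane]
      ring
    · have hT1 : (∑ a ∈ τ.1, ∑ a' ∈ τ'.1,
          if τ.1.erase a = τ'.1.erase a' then eps a τ.1 * eps a' τ'.1 else 0) = 0 := by
        apply Finset.sum_eq_zero
        intro a ha
        apply Finset.sum_eq_zero
        intro a' ha'
        rw [if_neg]
        intro h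
        apply hone
        have hsub : τ.1 \ τ'.1 ⊆ {a} := by
          intro x hx
          rcases Finset.mem_sdiff.1 hx with ⟨hx1, hx2⟩
          rw [Finset.mem_singleton]
          by_contra hxa
          have : x ∈ τ.1.erase a := Finset.mem_erase.2 ⟨hxa, hx1⟩
          rw [h] at this
          exact hx2 (Finset.mem_of_mem_erase this)
        have hnon : (τ.1 \ τ'.1).Nonempty := by
          rw [Finset.sdiff_nonempty]
          intro hsub2
          exact hdd (Finset.eq_of_subset_of_card_le hsub2 (le_of_eq hcardeq.symm))
        have h1 := Finset.card_le_card hsub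
        rw [Finset.card_singleton] at h1
        have h2 := Finset.card_pos.2 hnon
        omega
      have hT2 : (∑ b : Fin n, if b ∉ τ.1 then
          eps b (insert b τ.1) * bd τ'.1 (insert b τ.1) else 0) = 0 := by
        apply Finset.sum_eq_zero
        intro b _
        by_cases hbτ : b ∉ τ.1
        · rw [if_pos hbτ]
          have hz : bd τ'.1 (insert b τ.1) = 0 := by
            rw [bd]
            apply Finset.sum_eq_zero
            intro b' hb'
            rw [if_neg]
            intro h
            apply hone
            rw [Finset.card_sdiff_comm hcardeq]
            have hsub : τ'.1 \ τ.1 ⊆ {b} := by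
              intro x hx
              rcases Finset.mem_sdiff.1 hx with ⟨hx1, hx2⟩
              have : x ∈ insert b τ.1 := Finset.mem_of_mem_erase (h ▸ hx1)
              rcases Finset.mem_insert.1 this with h1 | h1
              · exact Finset.mem_singleton.2 h1
              · exact absurd h1 hx2
            have hnon : (τ'.1 \ τ.1).Nonempty := by
              rw [Finset.sdiff_nonempty]
              intro hsub2
              exact hdd (Finset.eq_of_subset_of_card_le hsub2 (le_of_eq hcardeq)).symm
            have h1 := Finset.card_le_card hsub
            rw [Finset.card_singleton] at h1
            have h2 := Finset.card_pos.2 hnon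
            omega
          rw [hz, mul_zero]
        · rw [if_neg hbτ]
      rw [hT1, hT2, add_zero]



/-- conversion between sums over `Face` with a condition and sums over `HFace`. -/
lemma sum_face_to_hface {j : ℕ} (f : Finset (Fin n) → ℝ) :
    (∑ σ : Face n j, if ∀ a ∈ σ.1, (a : ℕ) < n - 1 then f σ.1 else 0)
      = ∑ σ : HFace n j, f σ.1 := by
  classical
  have h1 : (∑ σ : Face n j, if ∀ a ∈ σ.1, (a : ℕ) < n - 1 then f σ.1 else 0)
      = ∑ s ∈ Finset.univ.filter (fun s : Finset (Fin n) => s.card = j),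
          (if ∀ a ∈ s, (a : ℕ) < n - 1 then f s else 0) :=
    (Finset.sum_subtype (p := fun s : Finset (Fin n) => s.card = j)
      (Finset.univ.filter (fun s : Finset (Fin n) => s.card = j)) (fun x => by simp)
      (fun s => if ∀ a ∈ s, (a : ℕ) < n - 1 then f s else 0)).symm
  have h2 : (∑ σ : HFace n j, f σ.1)
      = ∑ s ∈ Finset.univ.filter
          (fun s : Finset (Fin n) => s.card = j ∧ ∀ a ∈ s, (a : ℕ) < n - 1), f s :=
    (Finset.sum_subtype (p := fun s : Finset (Fin n) => s.card = j ∧ ∀ a ∈ s, (a : ℕ) < n - 1)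
      (Finset.univ.filter
        (fun s : Finset (Fin n) => s.card = j ∧ ∀ a ∈ s, (a : ℕ) < n - 1))
      (fun x => by simp) f).symm
  rw [h1, h2, Finset.sum_ite, Finset.sum_const_zero, add_zero, Finset.filter_filter]


lemma row_span (n m : ℕ) (hn : 1 ≤ n) :
    ∃ S : Matrix (Face n (m+1)) (HFace n (m+1)) ℝ,
      bdry n (m+1) = S * bdryHat n (m+1) := by
  classical
  set v : Fin n := ⟨n - 1, by omega⟩ with hv
  refine ⟨fun σ σ' => if ∀ a ∈ σ.1, (a : ℕ) < n - 1 then (if σ.1 = σ'.1 then 1 else 0)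
    else (-1 : ℝ)^(m+1) * bd (σ.1.erase v) σ'.1, ?_⟩
  ext σ τ
  erw [Matrix.mul_apply, bdry_eq]
  by_cases hσ : ∀ a ∈ σ.1, (a : ℕ) < n - 1
  · have : ∀ σ' : HFace n (m+1),
        (if ∀ a ∈ σ.1, (a : ℕ) < n - 1 then (if σ.1 = σ'.1 then (1:ℝ) else 0)
          else (-1 : ℝ)^(m+1) * bd (σ.1.erase v) σ'.1) * bdryHat n (m+1) σ' τ
        = if σ'.1 = σ.1 then bd σ'.1 τ.1 else 0 := by
      intro σ'
      rw [if_pos hσ, bdryHat_eq]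
      by_cases h : σ.1 = σ'.1
      · rw [if_pos h, if_pos h.symm, one_mul]
      · rw [if_neg h, if_neg (fun hh => h hh.symm), zero_mul]
    rw [Finset.sum_congr rfl (fun σ' _ => this σ')]
    rw [Fintype.sum_eq_single (⟨σ.1, σ.2, hσ⟩ : HFace n (m+1))]
    · rw [if_pos rfl]
    · intro σ' hσ'
      rw [if_neg (fun h => hσ' (Subtype.ext h))]
  · -- σ contains the vertex v
    have hvσ : v ∈ σ.1 := by
      push_neg at hσ
      obtain ⟨a, ha, hge⟩ := hσ
      have : (a : ℕ) = n - 1 := by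
        have := a.2
        omega
      have : a = v := by
        apply Fin.ext
        rw [this]
      rwa [← this]
    have hσcard : σ.1.card = m + 1 := σ.2
    have hηcard : (σ.1.erase v).card = m := by
      rw [Finset.card_erase_of_mem hvσ, hσcard]
      omega
    -- the relation from ∂∂ = 0
    have hrel := congrFun (congrFun (bdry_mul_bdry n m) ⟨σ.1.erase v, hηcard⟩) τ
    rw [Matrix.mul_apply, Matrix.zero_apply] at hrel
    -- split the sum over Face n (m+1)
    have hsplit : ∀ σ'' : Face n (m+1),
        bdry n m ⟨σ.1.erase v, hηcard⟩ σ'' * bdry n (m+1) σ'' τ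
        = (if ∀ a ∈ σ''.1, (a : ℕ) < n - 1 then bd (σ.1.erase v) σ''.1 * bd σ''.1 τ.1 else 0)
          + (if σ'' = σ then eps v σ.1 * bd σ.1 τ.1 else 0) := by
      intro σ''
      rw [bdry_eq, bdry_eq]
      by_cases hp : ∀ a ∈ σ''.1, (a : ℕ) < n - 1
      · rw [if_pos hp, if_neg, add_zero]
        intro he
        subst he
        have hvval : (v : ℕ) = n - 1 := rfl
        exact absurd (hp v hvσ) (by omega)
      · -- v ∈ σ''
        have hvσ'' : v ∈ σ''.1 := by
          push_neg at hp
          obtain ⟨a, ha, hge⟩ := hp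
          have ha2 : (a : ℕ) = n - 1 := by have := a.2; omega
          have : a = v := Fin.ext (by rw [ha2])
          rwa [← this]
        rw [if_neg hp, zero_add]
        by_cases he : σ'' = σ
        · subst he
          rw [if_pos rfl]
          congr 1
          -- bd (σ''.erase v) σ'' = eps v σ''
          rw [bd, Finset.sum_eq_single v]
          · rw [if_pos rfl]
          · intro a ha hne
            rw [if_neg]
            intro h
            have : v ∈ σ''.1.erase a := Finset.mem_erase.2 ⟨Ne.symm hne, hvσ''⟩
            rw [← h] at this
            exact (Finset.notMem_erase v σ''.1) this
          · intro h
            exact absurd hvσ'' h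
        · rw [if_neg he]
          -- bd (σ.erase v) σ'' = 0 since σ'' ∋ v, σ'' ≠ σ
          have hz : bd (σ.1.erase v) σ''.1 = 0 := by
            rw [bd]
            apply Finset.sum_eq_zero
            intro a ha
            rw [if_neg]
            intro h
            by_cases hav : a = v
            · subst hav
              apply he
              apply Subtype.ext
              rw [← Finset.insert_erase hvσ'', ← h, Finset.insert_erase hvσ]
            · have : v ∈ σ''.1.erase a := Finset.mem_erase.2 ⟨fun hh => hav hh.symm, hvσ''⟩
              rw [← h] at this
              exact (Finset.notMem_erase v σ.1) this
          rw [hz, zero_mul]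
    rw [Finset.sum_congr rfl (fun σ'' _ => hsplit σ''), Finset.sum_add_distrib] at hrel
    rw [sum_face_to_hface (fun s => bd (σ.1.erase v) s * bd s τ.1)] at hrel
    rw [Fintype.sum_eq_single σ (fun σ'' h => if_neg h)] at hrel
    rw [if_pos rfl] at hrel
    -- eps v σ.1 = (-1)^m
    have hepsv : eps v σ.1 = (-1 : ℝ)^m := by
      rw [eps]
      congr 1
      have : σ.1.filter (fun b => b < v) = σ.1.erase v := by
        ext x
        simp only [Finset.mem_filter, Finset.mem_erase]
        constructor
        · rintro ⟨hx1, hx2⟩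
          exact ⟨ne_of_lt hx2, hx1⟩
        · rintro ⟨hx1, hx2⟩
          refine ⟨hx2, ?_⟩
          have hxv : (x : ℕ) ≠ n - 1 := fun h => hx1 (Fin.ext h)
          have hx2' := x.2
          have hvval : (v : ℕ) = n - 1 := rfl
          exact Fin.lt_def.2 (by omega)
      rw [this, hηcard]
    -- conclude
    have hfin : ∀ σ' : HFace n (m+1),
        (if ∀ a ∈ σ.1, (a : ℕ) < n - 1 then (if σ.1 = σ'.1 then (1:ℝ) else 0)
          else (-1 : ℝ)^(m+1) * bd (σ.1.erase v) σ'.1) * bdryHat n (m+1) σ' τ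
        = (-1 : ℝ)^(m+1) * (bd (σ.1.erase v) σ'.1 * bd σ'.1 τ.1) := by
      intro σ'
      rw [if_neg hσ, bdryHat_eq]
      ring
    rw [Finset.sum_congr rfl (fun σ' _ => hfin σ'), ← Finset.mul_sum]
    have hsum : (∑ σ' : HFace n (m+1), bd (σ.1.erase v) σ'.1 * bd σ'.1 τ.1)
        = -((-1:ℝ)^m * bd σ.1 τ.1) := by
      rw [hepsv] at hrel
      linarith
    rw [hsum]
    have : (-1:ℝ)^(m+1) * -((-1:ℝ)^m * bd σ.1 τ.1)
        = ((-1:ℝ)^(m+1) * -(-1:ℝ)^m) * bd σ.1 τ.1 := by ring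
    rw [this]
    have h2 : ((-1:ℝ)^m * (-1:ℝ)^m) = 1 := by
      rw [← pow_add, ← two_mul, pow_mul]
      norm_num
    have h3 : ((-1:ℝ)^(m+1) * -(-1:ℝ)^m) = (-1:ℝ)^m * (-1:ℝ)^m := by
      rw [pow_succ]
      ring
    rw [h3, h2, one_mul]


lemma DDtD (n j : ℕ) :
    bdry n j * ((bdry n j)ᵀ * bdry n j) = (n : ℝ) • bdry n j := by
  have h := lap n j
  have key : bdry n j * ((bdry n j)ᵀ * bdry n j + bdry n (j+1) * (bdry n (j+1))ᵀ)
      = (n:ℝ) • bdry n j := by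
    rw [h, Matrix.mul_smul, Matrix.mul_one]
  rw [Matrix.mul_add, ← Matrix.mul_assoc (bdry n j) (bdry n (j+1)), bdry_mul_bdry, Matrix.zero_mul, add_zero] at key
  exact key

lemma hat_submatrix (n k : ℕ) :
    bdryHat n k = (bdry n k).submatrix (fun σ : HFace n k => (⟨σ.1, σ.2.1⟩ : Face n k)) id := rfl

lemma BDtD (n j : ℕ) :
    bdryHat n j * ((bdry n j)ᵀ * bdry n j) = (n : ℝ) • bdryHat n j := by
  have h := DDtD n j
  ext σ τ
  have e1 : (bdryHat n j * ((bdry n j)ᵀ * bdry n j)) σ τ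
      = (bdry n j * ((bdry n j)ᵀ * bdry n j)) ⟨σ.1, σ.2.1⟩ τ := by
    rw [Matrix.mul_apply, Matrix.mul_apply]
    rfl
  rw [e1, h, Matrix.smul_apply, Matrix.smul_apply]
  rfl

/-- `bd` of a hat-face against (σ ∪ {v}). -/
lemma bd_insert_vtx (n k : ℕ) (hn : 1 ≤ n) (σ' σ : HFace n k) :
    bd σ'.1 (insert (⟨n-1, by omega⟩ : Fin n) σ.1)
      = if σ'.1 = σ.1 then (-1:ℝ)^k else 0 := by
  classical
  set v : Fin n := ⟨n-1, by omega⟩ with hv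
  have hvσ : v ∉ σ.1 := fun h => absurd (σ.2.2 v h) (by simp [hv])
  rw [bd, Finset.sum_insert hvσ]
  have hz : ∀ a ∈ σ.1, (if σ'.1 = (insert v σ.1).erase a then eps a (insert v σ.1) else 0) = 0 := by
    intro a ha
    rw [if_neg]
    intro h
    have hav : a ≠ v := fun he => hvσ (he ▸ ha)
    have : v ∈ (insert v σ.1).erase a :=
      Finset.mem_erase.2 ⟨fun he => hav he.symm, Finset.mem_insert_self _ _⟩
    rw [← h] at this
    exact absurd (σ'.2.2 v this) (by simp [hv])
  rw [Finset.sum_congr rfl hz, Finset.sum_const_zero, add_zero, Finset.erase_insert hvσ]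
  have heps : eps v (insert v σ.1) = (-1:ℝ)^k := by
    rw [eps]
    congr 1
    have : (insert v σ.1).filter (fun b => b < v) = σ.1 := by
      ext x
      simp only [Finset.mem_filter, Finset.mem_insert]
      constructor
      · rintro ⟨h1 | h1, h2⟩
        · exact absurd h2 (by simp [h1])
        · exact h1
      · intro hx
        refine ⟨Or.inr hx, ?_⟩
        have := σ.2.2 x hx
        exact Fin.lt_def.2 (by simp [hv]; omega)
    rw [this, σ.2.1]
  rw [heps]

lemma hat_posdef (n k : ℕ) (hn : 1 ≤ n) :
    (bdryHat n k * (bdryHat n k)ᵀ).PosDef := by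
  classical
  set B := bdryHat n k with hB
  refine Matrix.PosDef.of_dotProduct_mulVec_pos ?_ ?_
  · have := Matrix.isHermitian_mul_conjTranspose_self B
    simpa [Matrix.conjTranspose_eq_transpose_of_trivial] using this
  · intro x hx
    set v : Fin n := ⟨n-1, by omega⟩ with hv
    have hdot : dotProduct (star x) ((B * Bᵀ) *ᵥ x) = dotProduct (x ᵥ* B) (x ᵥ* B) := by
      rw [star_trivial, ← Matrix.mulVec_mulVec, Matrix.dotProduct_mulVec, Matrix.mulVec_transpose]
    rw [hdot]
    have hy : x ᵥ* B ≠ 0 := by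
      obtain ⟨σ, hσ⟩ := Function.ne_iff.1 hx
      intro hzero
      have hcard : (insert v σ.1).card = k + 1 := by
        rw [Finset.card_insert_of_notMem (fun h => absurd (σ.2.2 v h) (by simp [hv])), σ.2.1]
      have := congrFun hzero (⟨insert v σ.1, hcard⟩ : Face n (k+1))
      rw [Matrix.vecMul, Pi.zero_apply] at this
      have hterm : ∀ σ' : HFace n k,
          x σ' * B σ' ⟨insert v σ.1, hcard⟩ = if σ' = σ then x σ * (-1:ℝ)^k else 0 := by
        intro σ'
        rw [hB, bdryHat_eq, bd_insert_vtx n k hn σ' σ]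
        by_cases h : σ' = σ
        · rw [if_pos h, if_pos (congrArg Subtype.val h), h]
        · rw [if_neg h, if_neg (fun hh => h (Subtype.ext hh)), mul_zero]
      rw [show dotProduct x (fun σ' => B σ' ⟨insert v σ.1, hcard⟩)
          = ∑ σ' : HFace n k, x σ' * B σ' ⟨insert v σ.1, hcard⟩ from rfl] at this
      rw [Finset.sum_congr rfl (fun σ' _ => hterm σ'), Finset.sum_ite_eq' Finset.univ σ
        (fun _ => x σ * (-1:ℝ)^k)] at this
      rw [if_pos (Finset.mem_univ σ)] at this
      exact hσ (by
        have hp : ((-1:ℝ)^k) ≠ 0 := pow_ne_zero _ (by norm_num)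
        field_simp at this
        exact (mul_eq_zero.1 this).resolve_right hp)
    have : 0 < dotProduct (x ᵥ* B) (x ᵥ* B) := by
      obtain ⟨τ, hτ⟩ := Function.ne_iff.1 hy
      apply Finset.sum_pos'
      · intro i _
        exact mul_self_nonneg _
      · exact ⟨τ, Finset.mem_univ τ, mul_self_pos.mpr (by simpa using hτ)⟩
    exact this
end BdryAux

open BdryAux

/-- Mészáros: `∂̂ ∂̂ᵗ` is invertible and
`∂̂ᵗ(∂̂ ∂̂ᵗ)⁻¹∂̂ = n⁻¹ ∂ᵗ∂`. -/
theorem projection_all_ones (n k : ℕ) (hk : 1 ≤ k) (hn : k < n) :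
    IsUnit (bdryHat n k * (bdryHat n k)ᵀ) ∧
    (bdryHat n k)ᵀ * (bdryHat n k * (bdryHat n k)ᵀ)⁻¹ * bdryHat n k
      = (n : ℝ)⁻¹ • ((bdry n k)ᵀ * bdry n k) := by
  obtain ⟨m, rfl⟩ : ∃ m, k = m + 1 := ⟨k - 1, by omega⟩
  have hn1 : 1 ≤ n := by omega
  set B := bdryHat n (m+1) with hBdef
  set D := bdry n (m+1) with hDdef
  have hpd := hat_posdef n (m+1) hn1
  have hA : IsUnit (B * Bᵀ) := hpd.isUnit
  refine ⟨hA, ?_⟩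
  have hdet : IsUnit (B * Bᵀ).det := (Matrix.isUnit_iff_isUnit_det _).1 hA
  have hAinvA : (B * Bᵀ)⁻¹ * (B * Bᵀ) = 1 := Matrix.nonsing_inv_mul _ hdet
  obtain ⟨S, hS⟩ := row_span n m hn1
  set Q := Bᵀ * (B * Bᵀ)⁻¹ * B with hQ
  have hnne : (n : ℝ) ≠ 0 := Nat.cast_ne_zero.2 (by omega)
  have hQBt : Q * Bᵀ = Bᵀ := by
    rw [hQ]
    calc Bᵀ * (B * Bᵀ)⁻¹ * B * Bᵀ = Bᵀ * ((B * Bᵀ)⁻¹ * (B * Bᵀ)) := by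
          rw [Matrix.mul_assoc, Matrix.mul_assoc]
    _ = Bᵀ := by rw [hAinvA, Matrix.mul_one]
  have hQD : Q * Dᵀ = Dᵀ := by
    rw [hDdef, hS, Matrix.transpose_mul, ← Matrix.mul_assoc, hQBt]
  have h3 : Q * ((n:ℝ)⁻¹ • (Dᵀ * D)) = (n:ℝ)⁻¹ • (Dᵀ * D) := by
    rw [Matrix.mul_smul, ← Matrix.mul_assoc, hQD]
  have hB' : B * (Dᵀ * D) = (n:ℝ) • B := BDtD n (m+1)
  have hQDtD : Q * (Dᵀ * D) = (n:ℝ) • Q := by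
    rw [hQ, Matrix.mul_assoc (Bᵀ * (B * Bᵀ)⁻¹) B (Dᵀ * D), hB', Matrix.mul_smul]
  have h4 : Q * ((n:ℝ)⁻¹ • (Dᵀ * D)) = Q := by
    rw [Matrix.mul_smul, hQDtD, smul_smul, inv_mul_cancel₀ hnne, one_smul]
  show Q = (n:ℝ)⁻¹ • (Dᵀ * D)
  rw [← h3, h4]
end

section
/- Let T be a set of (k+1)-element subsets of [n] with |T| = m3 and det ∂̂_{•,T} ≠ 0 (a ℚ-acyclic complex), with degree sequence d_i = d_i(T). Then for every x ∈ ℝⁿ with all coordinates nonzero, det(∂̂_{•,T})² ≤ (∏_{i∈[n]} (x_i²)^{m1−d_i}) · (Σ_{i∈[n]} x_i²)^{−m1} · ((Σ_{i∈[n]} d_i x_i²)/m3)^{m3}. -/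
open Matrix

namespace AMGMAux
open Finset

variable {n : ℕ}

noncomputable def sg (s : Finset (Fin n)) (a : Fin n) : ℝ :=
  (-1 : ℝ) ^ ((s.filter (· < a)).card)

lemma sg_sq (s : Finset (Fin n)) (a : Fin n) : sg s a * sg s a = 1 := by
  rw [sg, ← pow_add, ← two_mul, pow_mul]
  norm_num

lemma sg_ne_zero (s : Finset (Fin n)) (a : Fin n) : sg s a ≠ 0 :=
  fun h => by simpa [h] using sg_sq s a

lemma sg_insert {p : Fin n} (s : Finset (Fin n)) (hp : p ∉ s) (q : Fin n) :
    sg (insert p s) q = (if p < q then -1 else 1) * sg s q := by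
  rw [sg, sg, filter_insert]
  by_cases h : p < q
  · rw [if_pos h, if_pos h, card_insert_of_notMem (fun hc => hp (mem_filter.1 hc).1), pow_succ]
    ring
  · rw [if_neg h, if_neg h, one_mul]

lemma sg_insert_self (s : Finset (Fin n)) (a : Fin n) : sg (insert a s) a = sg s a := by
  rw [sg, sg, filter_insert, if_neg (lt_irrefl a)]

lemma sg_skew {p q : Fin n} (s : Finset (Fin n)) (hp : p ∉ s) (hq : q ∉ s) (hpq : p ≠ q) :
    sg (insert p s) q * sg (insert q s) p = -(sg s q * sg s p) := by
  rw [sg_insert s hp q, sg_insert s hq p]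
  rcases hpq.lt_or_gt with h | h
  · rw [if_pos h, if_neg (asymm h)]; ring
  · rw [if_neg (asymm h), if_pos h]; ring

abbrev gf (V : Finset (Fin n)) (j : ℕ) : Type := {s : Finset (Fin n) // s ⊆ V ∧ s.card = j}

noncomputable def WB (x : Fin n → ℝ) (V : Finset (Fin n)) (j : ℕ) :
    Matrix (gf V j) (gf V (j+1)) ℝ :=
  Matrix.of fun σ τ => ∑ a ∈ V \ σ.1, if τ.1 = insert a σ.1 then x a * sg σ.1 a else 0

lemma sum_face_ite {V : Finset (Fin n)} {j : ℕ} {t : Finset (Fin n)} (ht : t ⊆ V)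
    (htc : t.card = j) (f : gf V j → ℝ) :
    (∑ τ : gf V j, if τ.1 = t then f τ else 0) = f ⟨t, ht, htc⟩ := by
  rw [Finset.sum_eq_single_of_mem (⟨t, ht, htc⟩ : gf V j) (mem_univ _)]
  · rw [if_pos rfl]
  · intro b _ hb
    exact if_neg fun hc => hb (Subtype.ext hc)

lemma WB_apply_erase (x : Fin n → ℝ) {V : Finset (Fin n)} {j : ℕ} (σ : gf V j)
    (τ : gf V (j+1)) :
    WB x V j σ τ = ∑ a ∈ τ.1, if σ.1 = τ.1.erase a then x a * sg τ.1 a else 0 := by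
  by_cases hsub : σ.1 ⊆ τ.1
  · obtain ⟨a, ha⟩ : ∃ a, τ.1 \ σ.1 = {a} := by
      refine card_eq_one.1 ?_
      rw [card_sdiff_of_subset hsub, σ.2.2, τ.2.2]; omega
    have haτ : a ∈ τ.1 := (mem_sdiff.1 (ha ▸ mem_singleton_self a)).1
    have haσ : a ∉ σ.1 := (mem_sdiff.1 (ha ▸ mem_singleton_self a)).2
    have hins : τ.1 = insert a σ.1 := by
      rw [← Finset.sdiff_union_of_subset hsub, ha]; ext y; simp [or_comm]
    have herase : σ.1 = τ.1.erase a := by rw [hins, erase_insert haσ]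
    have hLHS : WB x V j σ τ = x a * sg σ.1 a := by
      simp only [WB, Matrix.of_apply]
      rw [Finset.sum_eq_single_of_mem a (mem_sdiff.2 ⟨τ.2.1 haτ, haσ⟩)]
      · rw [if_pos hins]
      · intro b hb hba
        refine if_neg fun hc => hba ?_
        have hbm : b ∈ τ.1 \ σ.1 := mem_sdiff.2 ⟨hc ▸ mem_insert_self b σ.1, (mem_sdiff.1 hb).2⟩
        rw [ha] at hbm
        exact mem_singleton.1 hbm
    rw [hLHS, Finset.sum_eq_single_of_mem a haτ]
    · rw [if_pos herase, hins, sg_insert_self]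
    · intro b hb hba
      refine if_neg fun hc => haσ ?_
      rw [hc]
      exact mem_erase.2 ⟨fun h => hba (h ▸ rfl), haτ⟩
  · have hLHS : WB x V j σ τ = 0 := by
      simp only [WB, Matrix.of_apply]
      refine sum_eq_zero fun b hb => if_neg fun hc => hsub ?_
      rw [hc]; exact subset_insert _ _
    rw [hLHS]
    refine (sum_eq_zero fun b hb => if_neg fun hc => hsub ?_).symm
    rw [hc]; exact erase_subset _ _

lemma face_insert_mem {V : Finset (Fin n)} {j : ℕ} (σ : gf V j) {a : Fin n}
    (ha : a ∈ V \ σ.1) : insert a σ.1 ⊆ V ∧ (insert a σ.1).card = j + 1 :=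
  ⟨insert_subset (mem_sdiff.1 ha).1 σ.2.1,
   by rw [card_insert_of_notMem (mem_sdiff.1 ha).2, σ.2.2]⟩

lemma face_erase_mem {V : Finset (Fin n)} {j : ℕ} (τ : gf V (j+1)) {a : Fin n}
    (ha : a ∈ τ.1) : τ.1.erase a ⊆ V ∧ (τ.1.erase a).card = j :=
  ⟨(erase_subset _ _).trans τ.2.1, by rw [card_erase_of_mem ha, τ.2.2]; omega⟩

lemma mulT_apply (x : Fin n → ℝ) {V : Finset (Fin n)} {j : ℕ} (σ σ' : gf V j) :
    (WB x V j * (WB x V j)ᵀ) σ σ' =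
      ∑ a ∈ V \ σ.1, ∑ b ∈ V \ σ'.1,
        if insert a σ.1 = insert b σ'.1 then (x a * sg σ.1 a) * (x b * sg σ'.1 b) else 0 := by
  rw [Matrix.mul_apply]
  simp only [transpose_apply, WB, Matrix.of_apply]
  simp only [Finset.sum_mul_sum]
  rw [Finset.sum_comm]
  refine Finset.sum_congr rfl fun a ha => ?_
  rw [Finset.sum_comm]
  refine Finset.sum_congr rfl fun b hb => ?_
  simp only [ite_zero_mul_ite_zero]
  by_cases hAB : insert a σ.1 = insert b σ'.1
  · rw [if_pos hAB]
    rw [hAB]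
    simp only [and_self]
    exact sum_face_ite (face_insert_mem σ' hb).1 (face_insert_mem σ' hb).2 _
  · rw [if_neg hAB]
    exact sum_eq_zero fun τ _ => if_neg fun hc => hAB (hc.1.symm.trans hc.2)

lemma Tmul_apply (x : Fin n → ℝ) {V : Finset (Fin n)} {j : ℕ} (τ τ' : gf V (j+1)) :
    ((WB x V j)ᵀ * WB x V j) τ τ' =
      ∑ a ∈ τ.1, ∑ b ∈ τ'.1,
        if τ.1.erase a = τ'.1.erase b then (x a * sg τ.1 a) * (x b * sg τ'.1 b) else 0 := by
  rw [Matrix.mul_apply]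
  simp only [transpose_apply]
  have : ∀ σ : gf V j, WB x V j σ τ * WB x V j σ τ' =
      ∑ a ∈ τ.1, ∑ b ∈ τ'.1,
        (if σ.1 = τ.1.erase a then x a * sg τ.1 a else 0) *
        (if σ.1 = τ'.1.erase b then x b * sg τ'.1 b else 0) := by
    intro σ
    rw [WB_apply_erase, WB_apply_erase, Finset.sum_mul_sum]
  simp only [this]
  rw [Finset.sum_comm]
  refine Finset.sum_congr rfl fun a ha => ?_
  rw [Finset.sum_comm]
  refine Finset.sum_congr rfl fun b hb => ?_
  simp only [ite_zero_mul_ite_zero]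
  by_cases hAB : τ.1.erase a = τ'.1.erase b
  · rw [if_pos hAB]
    rw [hAB]
    simp only [and_self]
    exact sum_face_ite (face_erase_mem τ' hb).1 (face_erase_mem τ' hb).2 _
  · rw [if_neg hAB]
    exact sum_eq_zero fun σ _ => if_neg fun hc => hAB (hc.1.symm.trans hc.2)


lemma sg_skew' {p q : Fin n} (s : Finset (Fin n)) (hp : p ∉ s) (hq : q ∉ s) (hpq : p ≠ q) :
    sg s p * sg (insert p s) q = -(sg s q * sg (insert q s) p) := by
  rw [sg_insert s hp q, sg_insert s hq p]
  rcases hpq.lt_or_gt with h | h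
  · rw [if_pos h, if_neg (asymm h)]; ring
  · rw [if_neg (asymm h), if_pos h]; ring

lemma mulT_diag (x : Fin n → ℝ) {V : Finset (Fin n)} {j : ℕ} (σ : gf V j) :
    (WB x V j * (WB x V j)ᵀ) σ σ = ∑ a ∈ V \ σ.1, x a ^ 2 := by
  rw [mulT_apply]
  refine Finset.sum_congr rfl fun a ha => ?_
  rw [Finset.sum_eq_single_of_mem a ha]
  · rw [if_pos rfl]
    have := sg_sq σ.1 a
    nlinarith [this]
  · intro b hb hba
    refine if_neg fun hc => hba ?_
    have hm : b ∈ insert a σ.1 := hc ▸ mem_insert_self b σ.1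
    rcases mem_insert.1 hm with h | h
    · exact h
    · exact absurd h (mem_sdiff.1 hb).2

lemma Tmul_diag (x : Fin n → ℝ) {V : Finset (Fin n)} {j : ℕ} (τ : gf V (j+1)) :
    ((WB x V j)ᵀ * WB x V j) τ τ = ∑ a ∈ τ.1, x a ^ 2 := by
  rw [Tmul_apply]
  refine Finset.sum_congr rfl fun a ha => ?_
  rw [Finset.sum_eq_single_of_mem a ha]
  · rw [if_pos rfl]
    have := sg_sq τ.1 a
    nlinarith [this]
  · intro b hb hba
    refine if_neg fun hc => ?_
    have hm : a ∈ τ.1.erase b := mem_erase.2 ⟨fun h => hba (h ▸ rfl), ha⟩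
    rw [← hc] at hm
    exact (mem_erase.1 hm).1 rfl

lemma L3 (x : Fin n → ℝ) (V : Finset (Fin n)) (j : ℕ) :
    (WB x V j)ᵀ * WB x V j + WB x V (j+1) * (WB x V (j+1))ᵀ =
      (∑ i ∈ V, x i ^ 2) • (1 : Matrix (gf V (j+1)) (gf V (j+1)) ℝ) := by
  ext τ τ'
  rw [Matrix.add_apply]
  by_cases hne : τ = τ'
  · subst hne
    rw [Tmul_diag, mulT_diag, Matrix.smul_apply, Matrix.one_apply_eq, smul_eq_mul, mul_one,
      add_comm]
    exact Finset.sum_sdiff τ.2.1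
  · have hττ' : τ.1 ≠ τ'.1 := fun h => hne (Subtype.ext h)
    rw [Matrix.smul_apply, Matrix.one_apply_ne hne, smul_eq_mul, mul_zero,
      Tmul_apply, mulT_apply]
    by_cases hex : ∃ p q, p ∈ τ.1 ∧ q ∈ τ'.1 ∧ τ.1.erase p = τ'.1.erase q
    · obtain ⟨p, q, hp, hq, he⟩ := hex
      have hpq : p ≠ q := by
        rintro rfl
        exact hττ' (by rw [← insert_erase hp, he, insert_erase hq])
      have hqτ : q ∉ τ.1 := by
        intro h
        have hm : q ∈ τ.1.erase p := mem_erase.2 ⟨hpq.symm, h⟩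
        rw [he] at hm
        exact (mem_erase.1 hm).1 rfl
      have hpτ' : p ∉ τ'.1 := by
        intro h
        have hm : p ∈ τ'.1.erase q := mem_erase.2 ⟨hpq, h⟩
        rw [← he] at hm
        exact (mem_erase.1 hm).1 rfl
      set ρ := τ.1.erase p with hρ
      have hτ1 : τ.1 = insert p ρ := (insert_erase hp).symm
      have hτ'1 : τ'.1 = insert q ρ := by rw [he]; exact (insert_erase hq).symm
      have hpρ : p ∉ ρ := notMem_erase _ _
      have hqρ : q ∉ ρ := fun h => hqτ ((erase_subset _ _) h)
      have hS1 : (∑ a ∈ τ.1, ∑ b ∈ τ'.1,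
          if τ.1.erase a = τ'.1.erase b then (x a * sg τ.1 a) * (x b * sg τ'.1 b) else 0)
          = (x p * sg τ.1 p) * (x q * sg τ'.1 q) := by
        rw [Finset.sum_eq_single_of_mem p hp]
        · rw [Finset.sum_eq_single_of_mem q hq]
          · rw [if_pos he]
          · intro b hb hbq
            refine if_neg fun hc => ?_
            have hm : q ∈ τ'.1.erase b := mem_erase.2 ⟨fun h => hbq h.symm, hq⟩
            rw [← hc] at hm
            exact hqτ ((erase_subset _ _) hm)
        · intro a ha hap
          refine Finset.sum_eq_zero fun b hb => if_neg fun hc => ?_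
          by_cases hbq : b = q
          · subst hbq
            rw [← he] at hc
            have hm : p ∈ τ.1.erase a := mem_erase.2 ⟨fun h => hap h.symm, hp⟩
            rw [hc] at hm
            exact (mem_erase.1 hm).1 rfl
          · have hm : q ∈ τ'.1.erase b := mem_erase.2 ⟨fun h => hbq h.symm, hq⟩
            rw [← hc] at hm
            exact hqτ ((erase_subset _ _) hm)
      have hS2 : (∑ a ∈ V \ τ.1, ∑ b ∈ V \ τ'.1,
          if insert a τ.1 = insert b τ'.1 then (x a * sg τ.1 a) * (x b * sg τ'.1 b) else 0)
          = (x q * sg τ.1 q) * (x p * sg τ'.1 p) := by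
        have hqV : q ∈ V \ τ.1 := mem_sdiff.2 ⟨τ'.2.1 hq, hqτ⟩
        have hpV : p ∈ V \ τ'.1 := mem_sdiff.2 ⟨τ.2.1 hp, hpτ'⟩
        rw [Finset.sum_eq_single_of_mem q hqV]
        · rw [Finset.sum_eq_single_of_mem p hpV]
          · rw [if_pos (by rw [hτ1, hτ'1, Finset.insert_comm])]
          · intro b hb hbp
            refine if_neg fun hc => ?_
            have hm : b ∈ insert q τ.1 := hc ▸ mem_insert_self b τ'.1
            rcases mem_insert.1 hm with h | h
            · exact (mem_sdiff.1 hb).2 (h ▸ hq)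
            · rw [hτ1] at h
              rcases mem_insert.1 h with h' | h'
              · exact hbp h'
              · exact (mem_sdiff.1 hb).2 (hτ'1 ▸ mem_insert_of_mem h')
        · intro a ha haq
          refine Finset.sum_eq_zero fun b hb => if_neg fun hc => ?_
          have hm : a ∈ insert b τ'.1 := hc ▸ mem_insert_self a τ.1
          rcases mem_insert.1 hm with h | h
          · subst h
            refine hττ' ?_
            calc τ.1 = (insert a τ.1).erase a := (erase_insert (mem_sdiff.1 ha).2).symm
              _ = (insert a τ'.1).erase a := by rw [hc]
              _ = τ'.1 := erase_insert (mem_sdiff.1 hb).2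
          · rw [hτ'1] at h
            rcases mem_insert.1 h with h' | h'
            · exact haq h'
            · exact (mem_sdiff.1 ha).2 (hτ1 ▸ mem_insert_of_mem h')
      rw [hS1, hS2, hτ1, hτ'1, sg_insert_self, sg_insert_self]
      have hskew := sg_skew ρ hpρ hqρ hpq
      linear_combination (x p * x q) * hskew
    · have hZ1 : (∑ a ∈ τ.1, ∑ b ∈ τ'.1,
          if τ.1.erase a = τ'.1.erase b then (x a * sg τ.1 a) * (x b * sg τ'.1 b) else 0) = 0 :=
        Finset.sum_eq_zero fun a ha => Finset.sum_eq_zero fun b hb =>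
          if_neg fun hc => hex ⟨a, b, ha, hb, hc⟩
      have hZ2 : (∑ a ∈ V \ τ.1, ∑ b ∈ V \ τ'.1,
          if insert a τ.1 = insert b τ'.1 then (x a * sg τ.1 a) * (x b * sg τ'.1 b) else 0) = 0 := by
        refine Finset.sum_eq_zero fun a ha => Finset.sum_eq_zero fun b hb =>
          if_neg fun hc => ?_
        have hab : a ≠ b := by
          rintro rfl
          refine hττ' ?_
          calc τ.1 = (insert a τ.1).erase a := (erase_insert (mem_sdiff.1 ha).2).symm
            _ = (insert a τ'.1).erase a := by rw [hc]
            _ = τ'.1 := erase_insert (mem_sdiff.1 hb).2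
        have hbτ : b ∈ τ.1 := by
          have hm : b ∈ insert a τ.1 := hc ▸ mem_insert_self b τ'.1
          rcases mem_insert.1 hm with h | h
          · exact absurd h.symm hab
          · exact h
        have haτ' : a ∈ τ'.1 := by
          have hm : a ∈ insert b τ'.1 := hc ▸ mem_insert_self a τ.1
          rcases mem_insert.1 hm with h | h
          · exact absurd h hab
          · exact h
        refine hex ⟨b, a, hbτ, haτ', ?_⟩
        calc τ.1.erase b = ((insert a τ.1).erase a).erase b := by
              rw [erase_insert (mem_sdiff.1 ha).2]
          _ = ((insert b τ'.1).erase a).erase b := by rw [hc]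
          _ = ((insert b τ'.1).erase b).erase a := Finset.erase_right_comm
          _ = τ'.1.erase a := by rw [erase_insert (mem_sdiff.1 hb).2]
      rw [hZ1, hZ2, add_zero]

lemma L2 (x : Fin n → ℝ) (V : Finset (Fin n)) (j : ℕ) :
    WB x V j * WB x V (j+1) = 0 := by
  ext σ μ
  rw [Matrix.mul_apply, Matrix.zero_apply]
  have step : (∑ τ : gf V (j+1), WB x V j σ τ * WB x V (j+1) τ μ)
      = ∑ a ∈ V \ σ.1, ∑ b ∈ V \ σ.1,
          (x a * sg σ.1 a) *
            (if μ.1 = insert b (insert a σ.1) then x b * sg (insert a σ.1) b else 0) := by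
    have e1 : ∀ τ : gf V (j+1), WB x V j σ τ * WB x V (j+1) τ μ
        = ∑ a ∈ V \ σ.1, if τ.1 = insert a σ.1
            then (x a * sg σ.1 a) * WB x V (j+1) τ μ else 0 := by
      intro τ
      show (∑ a ∈ V \ σ.1, if τ.1 = insert a σ.1 then x a * sg σ.1 a else 0)
          * WB x V (j+1) τ μ = _
      rw [Finset.sum_mul]
      exact Finset.sum_congr rfl fun a _ => ite_zero_mul _ _ _
    simp only [e1]
    rw [Finset.sum_comm]
    refine Finset.sum_congr rfl fun a ha => ?_
    rw [sum_face_ite (face_insert_mem σ ha).1 (face_insert_mem σ ha).2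
        (fun τ => (x a * sg σ.1 a) * WB x V (j+1) τ μ)]
    show (x a * sg σ.1 a) * (∑ b ∈ V \ insert a σ.1,
        if μ.1 = insert b (insert a σ.1) then x b * sg (insert a σ.1) b else 0) = _
    rw [Finset.sdiff_insert, Finset.sum_erase _ (by
      refine if_neg fun hc => ?_
      have h1 := μ.2.2
      rw [hc, insert_idem] at h1
      have h2 := (face_insert_mem σ ha).2
      omega), Finset.mul_sum]
  rw [step]
  set f : Fin n → Fin n → ℝ := fun a b =>
    (x a * sg σ.1 a) *
      (if μ.1 = insert b (insert a σ.1) then x b * sg (insert a σ.1) b else 0) with hf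
  have key : ∀ a ∈ V \ σ.1, ∀ b ∈ V \ σ.1, f a b = -(f b a) := by
    intro a ha b hb
    by_cases hab : a = b
    · subst hab
      have hcond : ¬ (μ.1 = insert a (insert a σ.1)) := fun hc => by
        have h1 := μ.2.2
        rw [hc, insert_idem] at h1
        have h2 := (face_insert_mem σ ha).2
        omega
      simp only [hf, if_neg hcond]
      ring
    · have hiff : (μ.1 = insert b (insert a σ.1)) ↔ (μ.1 = insert a (insert b σ.1)) := by
        rw [Finset.insert_comm]
      by_cases hc : μ.1 = insert b (insert a σ.1)
      · simp only [hf, if_pos hc, if_pos (hiff.1 hc)]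
        have hskew := sg_skew' σ.1 (mem_sdiff.1 ha).2 (mem_sdiff.1 hb).2 hab
        linear_combination (x a * x b) * hskew
      · simp only [hf, if_neg hc, if_neg (fun h => hc (hiff.2 h))]
        ring
  have h1 : (∑ a ∈ V \ σ.1, ∑ b ∈ V \ σ.1, f a b)
      = ∑ a ∈ V \ σ.1, ∑ b ∈ V \ σ.1, -(f b a) :=
    Finset.sum_congr rfl fun a ha => Finset.sum_congr rfl fun b hb => key a ha b hb
  have h3 : (∑ a ∈ V \ σ.1, ∑ b ∈ V \ σ.1, -(f b a))
      = -(∑ a ∈ V \ σ.1, ∑ b ∈ V \ σ.1, f a b) := by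
    rw [Finset.sum_comm (s := V \ σ.1) (t := V \ σ.1) (f := fun a b => -(f b a))]
    simp
  have h2 := h1.trans h3
  linarith

lemma Asq (x : Fin n → ℝ) (V : Finset (Fin n)) (j : ℕ) :
    (WB x V j * (WB x V j)ᵀ) * (WB x V j * (WB x V j)ᵀ)
      = (∑ i ∈ V, x i ^ 2) • (WB x V j * (WB x V j)ᵀ) := by
  have hB : (WB x V j)ᵀ * WB x V j
      = (∑ i ∈ V, x i ^ 2) • (1 : Matrix (gf V (j+1)) (gf V (j+1)) ℝ)
        - WB x V (j+1) * (WB x V (j+1))ᵀ := eq_sub_of_add_eq (L3 x V j)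
  calc (WB x V j * (WB x V j)ᵀ) * (WB x V j * (WB x V j)ᵀ)
      = WB x V j * ((WB x V j)ᵀ * WB x V j) * (WB x V j)ᵀ := by
        rw [Matrix.mul_assoc, Matrix.mul_assoc, Matrix.mul_assoc]
    _ = (∑ i ∈ V, x i ^ 2) • (WB x V j * (WB x V j)ᵀ) := by
        rw [hB, Matrix.mul_sub, Matrix.sub_mul, Matrix.mul_smul, Matrix.mul_one,
          Matrix.smul_mul]
        rw [show WB x V j * (WB x V (j+1) * (WB x V (j+1))ᵀ) * (WB x V j)ᵀ
            = (WB x V j * WB x V (j+1)) * ((WB x V (j+1))ᵀ * (WB x V j)ᵀ) by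
          rw [Matrix.mul_assoc, Matrix.mul_assoc, Matrix.mul_assoc]]
        rw [L2, Matrix.zero_mul, sub_zero]

lemma card_gf (V : Finset (Fin n)) (j : ℕ) : Fintype.card (gf V j) = V.card.choose j := by
  rw [Fintype.card_of_subtype (V.powersetCard j) (fun s => Finset.mem_powersetCard),
    Finset.card_powersetCard]

lemma count_not_mem {V : Finset (Fin n)} {j : ℕ} {a : Fin n} (ha : a ∈ V) :
    (univ.filter fun σ : gf V j => a ∉ σ.1).card = (V.card - 1).choose j := by
  rw [show (V.card - 1) = (V.erase a).card by rw [card_erase_of_mem ha],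
    ← Finset.card_powersetCard]
  refine Finset.card_bij (fun σ _ => σ.1) ?_ ?_ ?_
  · intro σ hσ
    rw [Finset.mem_powersetCard]
    exact ⟨Finset.subset_erase.2 ⟨σ.2.1, (mem_filter.1 hσ).2⟩, σ.2.2⟩
  · intro σ1 h1 σ2 h2 h
    exact Subtype.ext h
  · intro t ht
    rw [Finset.mem_powersetCard] at ht
    exact ⟨⟨t, (Finset.subset_erase.1 ht.1).1, ht.2⟩,
      mem_filter.2 ⟨mem_univ _, (Finset.subset_erase.1 ht.1).2⟩, rfl⟩

lemma count_mem {V : Finset (Fin n)} {j : ℕ} {a : Fin n} (ha : a ∈ V) :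
    (univ.filter fun σ : gf V j => a ∈ σ.1).card
      = V.card.choose j - (V.card - 1).choose j := by
  have h := Finset.card_filter_add_card_filter_not
    (s := (univ : Finset (gf V j))) (p := fun σ => a ∈ σ.1)
  rw [Finset.card_univ, card_gf] at h
  have h2 : (univ.filter fun σ : gf V j => ¬ a ∈ σ.1).card = (V.card - 1).choose j :=
    count_not_mem ha
  omega

lemma traceA (x : Fin n → ℝ) (V : Finset (Fin n)) (j : ℕ) :
    Matrix.trace (WB x V j * (WB x V j)ᵀ)
      = (∑ i ∈ V, x i ^ 2) * ((V.card - 1).choose j) := by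
  rw [Matrix.trace]
  have h1 : ∀ σ : gf V j, Matrix.diag (WB x V j * (WB x V j)ᵀ) σ
      = ∑ a ∈ V, if a ∉ σ.1 then x a ^ 2 else 0 := by
    intro σ
    rw [Matrix.diag_apply, mulT_diag, Finset.sdiff_eq_filter, Finset.sum_filter]
  rw [Finset.sum_congr rfl fun σ _ => h1 σ, Finset.sum_comm]
  have h2 : ∀ a ∈ V, (∑ σ : gf V j, if a ∉ σ.1 then x a ^ 2 else 0)
      = x a ^ 2 * ((V.card - 1).choose j) := by
    intro a ha
    rw [← Finset.sum_filter, Finset.sum_const, count_not_mem ha, nsmul_eq_mul, mul_comm]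
  rw [Finset.sum_congr rfl h2, ← Finset.sum_mul]


section Spectral

variable {ι : Type} [Fintype ι] [DecidableEq ι]

lemma ofReal_comp_eq {f : ι → ℝ} : (RCLike.ofReal ∘ f : ι → ℝ) = f := by
  rw [RCLike.ofReal_real_eq_id]
  rfl

lemma trace_eq_sum_eigenvalues {A : Matrix ι ι ℝ} (hA : A.IsHermitian) :
    A.trace = ∑ i, hA.eigenvalues i := by
  set U : Matrix ι ι ℝ := ↑(hA.eigenvectorUnitary) with hUdef
  have hU2 : star U * U = 1 := (Matrix.mem_unitaryGroup_iff').mp hA.eigenvectorUnitary.2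
  conv_lhs => rw [hA.spectral_theorem, Unitary.conjStarAlgAut_apply]
  rw [Matrix.trace_mul_comm, ← Matrix.mul_assoc, hU2, Matrix.one_mul, Matrix.trace_diagonal]
  simp [ofReal_comp_eq]

lemma spec_det {A : Matrix ι ι ℝ} (hA : A.IsHermitian) {s : ℝ} (hs : s ≠ 0)
    (hAA : A * A = s • A) {r : ℕ} (htr : A.trace = s * r) (c : ℝ) :
    (c • (1 : Matrix ι ι ℝ) + A).det = c ^ (Fintype.card ι - r) * (c + s) ^ r := by
  classical
  set U : Matrix ι ι ℝ := ↑(hA.eigenvectorUnitary) with hUdef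
  have hU1 : U * star U = 1 := (Matrix.mem_unitaryGroup_iff).mp hA.eigenvectorUnitary.2
  have hU2 : star U * U = 1 := (Matrix.mem_unitaryGroup_iff').mp hA.eigenvectorUnitary.2
  set ev := hA.eigenvalues with hev
  have hD : star U * A * U = Matrix.diagonal ev := by
    have h := hA.spectral_theorem
    rw [Unitary.conjStarAlgAut_apply, ofReal_comp_eq] at h
    conv_lhs => rw [h]
    simp only [← Matrix.mul_assoc]
    rw [hU2, Matrix.one_mul, Matrix.mul_assoc, hU2, Matrix.mul_one]
  have e1 : (star U * A * U) * (star U * A * U) = star U * (A * A) * U := by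
    rw [Matrix.mul_assoc (star U * A) U _]
    rw [show U * (star U * A * U) = A * U by
      rw [← Matrix.mul_assoc, ← Matrix.mul_assoc, hU1, Matrix.one_mul]]
    rw [← Matrix.mul_assoc, Matrix.mul_assoc (star U) A A]
  have hDD : Matrix.diagonal ev * Matrix.diagonal ev = s • Matrix.diagonal ev := by
    rw [← hD, e1, hAA, Matrix.mul_smul, Matrix.smul_mul]
  have hev01 : ∀ i, ev i = 0 ∨ ev i = s := by
    intro i
    have h := congrFun (congrFun hDD i) i
    simp only [Matrix.diagonal_mul_diagonal, Matrix.diagonal_apply_eq, Matrix.smul_apply,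
      smul_eq_mul] at h
    rcases eq_or_ne (ev i) 0 with h0 | h0
    · exact Or.inl h0
    · exact Or.inr (mul_right_cancel₀ h0 h)
  have htr2 : ∑ i, ev i = s * r := by rw [← trace_eq_sum_eigenvalues hA, htr]
  set P := univ.filter (fun i => ev i = s) with hP
  have hPcard : (P.card : ℝ) * s = s * r := by
    rw [← htr2, ← Finset.sum_filter_add_sum_filter_not univ (fun i => ev i = s) ev]
    have hfirst : ∑ i ∈ P, ev i = (P.card : ℝ) * s := by
      rw [Finset.sum_congr rfl (fun i hi => (mem_filter.1 hi).2), Finset.sum_const,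
        nsmul_eq_mul]
    have hsecond : ∑ i ∈ univ.filter (fun i => ¬ ev i = s), ev i = 0 :=
      Finset.sum_eq_zero fun i hi => (hev01 i).resolve_right (mem_filter.1 hi).2
    rw [hfirst, hsecond, add_zero]
  have hr : P.card = r := by
    have hcast : (P.card : ℝ) = r := by
      have := hPcard.trans (mul_comm s r)
      exact mul_right_cancel₀ hs this
    exact_mod_cast hcast
  have hdet : (c • (1 : Matrix ι ι ℝ) + A).det = ∏ i, (c + ev i) := by
    have hA' : A = U * Matrix.diagonal ev * star U := by
      have h := hA.spectral_theorem
      rwa [Unitary.conjStarAlgAut_apply, ofReal_comp_eq] at h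
    have hdiag_split : Matrix.diagonal (fun i => c + ev i)
        = c • (1 : Matrix ι ι ℝ) + Matrix.diagonal ev := by
      ext i j
      by_cases hij : i = j
      · subst hij
        simp
      · simp [Matrix.diagonal_apply_ne _ hij, Matrix.one_apply_ne hij]
    have hsum : c • (1 : Matrix ι ι ℝ) + A
        = U * (Matrix.diagonal (fun i => c + ev i)) * star U := by
      rw [hdiag_split, Matrix.mul_add, Matrix.add_mul, Matrix.mul_smul, Matrix.mul_one,
        Matrix.smul_mul, hU1, ← hA']
    rw [hsum, Matrix.det_mul, Matrix.det_mul, Matrix.det_diagonal]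
    have hdet1 : U.det * (star U).det = 1 := by rw [← Matrix.det_mul, hU1, Matrix.det_one]
    calc U.det * (∏ i, (c + ev i)) * (star U).det
        = (U.det * (star U).det) * ∏ i, (c + ev i) := by ring
      _ = ∏ i, (c + ev i) := by rw [hdet1, one_mul]
  rw [hdet, ← Finset.prod_filter_mul_prod_filter_not univ (fun i => ev i = s)]
  have h1 : ∏ i ∈ P, (c + ev i) = (c + s) ^ r := by
    rw [Finset.prod_congr rfl (fun i hi => by rw [(mem_filter.1 hi).2]), Finset.prod_const, hr]
  have h2 : ∏ i ∈ univ.filter (fun i => ¬ ev i = s), (c + ev i)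
      = c ^ (Fintype.card ι - r) := by
    rw [Finset.prod_congr rfl (fun i hi => by
      rw [(hev01 i).resolve_right (mem_filter.1 hi).2, add_zero]), Finset.prod_const]
    congr 1
    have hc := Finset.card_filter_add_card_filter_not
      (s := (univ : Finset ι)) (p := fun i => ev i = s)
    rw [Finset.card_univ, ← hP] at hc
    omega
  rw [h1, h2, mul_comm]

lemma det_le_trace_pow {κ : Type} [Fintype κ] (N : Matrix κ ι ℝ) :
    (Nᵀ * N).det ≤ ((Nᵀ * N).trace / (Fintype.card ι : ℝ)) ^ (Fintype.card ι) := by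
  rcases isEmpty_or_nonempty ι with hι | hι
  · rw [Matrix.det_isEmpty, Fintype.card_eq_zero, pow_zero]
  · have hG : (Nᵀ * N).PosSemidef := by
      have h := Matrix.posSemidef_conjTranspose_mul_self N
      rwa [Matrix.conjTranspose_eq_transpose_of_trivial] at h
    have hH := hG.isHermitian
    set ev := hH.eigenvalues with hev
    have hnn : ∀ i, 0 ≤ ev i := hG.eigenvalues_nonneg
    have hdet : (Nᵀ * N).det = ∏ i, ev i := by
      have h := hH.det_eq_prod_eigenvalues
      simpa using h
    have htr : (Nᵀ * N).trace = ∑ i, ev i := trace_eq_sum_eigenvalues hH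
    set m := Fintype.card ι with hm
    have hm0 : 0 < m := Fintype.card_pos
    have hmR : ((m : ℝ)) ≠ 0 := Nat.cast_ne_zero.2 hm0.ne'
    have hgm := Real.geom_mean_le_arith_mean_weighted univ (fun _ => (m:ℝ)⁻¹) ev
      (fun i _ => by positivity)
      (by rw [Finset.sum_const, Finset.card_univ, ← hm, nsmul_eq_mul, mul_inv_cancel₀ hmR])
      (fun i _ => hnn i)
    have hR : ∑ i : ι, (m:ℝ)⁻¹ * ev i = (∑ i, ev i) / m := by
      rw [← Finset.mul_sum]; ring
    have hL : (∏ i : ι, ev i ^ ((m:ℝ)⁻¹)) ^ m = ∏ i, ev i := by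
      rw [← Finset.prod_pow]
      refine Finset.prod_congr rfl fun i _ => ?_
      rw [← Real.rpow_natCast (ev i ^ ((m:ℝ)⁻¹)) m, ← Real.rpow_mul (hnn i),
        inv_mul_cancel₀ hmR, Real.rpow_one]
    calc (Nᵀ*N).det = (∏ i, ev i ^ ((m:ℝ)⁻¹)) ^ m := by rw [hdet, hL]
      _ ≤ ((∑ i, ev i) / m) ^ m := by
          apply pow_le_pow_left₀ (Finset.prod_nonneg fun i _ => Real.rpow_nonneg (hnn i) _)
          rw [← hR]; exact hgm
      _ = ((Nᵀ * N).trace / m) ^ m := by rw [htr]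

end Spectral


section Main

variable {m : ℕ} (x : Fin (m+1) → ℝ)

/-- ground set avoiding the last vertex -/
abbrev VV (m : ℕ) : Finset (Fin (m+1)) := (univ : Finset (Fin (m+1))).erase (Fin.last m)

lemma vnot {j : ℕ} (ρ : gf (VV m) j) : Fin.last m ∉ ρ.1 :=
  fun h => (mem_erase.1 (ρ.2.1 h)).1 rfl

lemma mem_VV_ne {j : ℕ} (ρ : gf (VV m) j) {a : Fin (m+1)} (ha : a ∈ VV m \ ρ.1) :
    a ≠ Fin.last m := fun h => (mem_erase.1 (mem_sdiff.1 ha).1).1 h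

def toUk {j : ℕ} (σ : gf (VV m) j) : gf (univ : Finset (Fin (m+1))) j :=
  ⟨σ.1, subset_univ _, σ.2.2⟩

def stK {j : ℕ} (ρ : gf (VV m) j) : gf (univ : Finset (Fin (m+1))) (j+1) :=
  ⟨insert (Fin.last m) ρ.1, subset_univ _, by rw [card_insert_of_notMem (vnot ρ), ρ.2.2]⟩

@[simp] lemma toUk_coe {j : ℕ} (σ : gf (VV m) j) : (toUk σ).1 = σ.1 := rfl
@[simp] lemma stK_coe {j : ℕ} (ρ : gf (VV m) j) :
    (stK ρ).1 = insert (Fin.last m) ρ.1 := rfl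

lemma insert_last_cancel {s t : Finset (Fin (m+1))} (hs : Fin.last m ∉ s)
    (ht : Fin.last m ∉ t) (h : insert (Fin.last m) s = insert (Fin.last m) t) : s = t := by
  calc s = (insert (Fin.last m) s).erase (Fin.last m) := (erase_insert hs).symm
    _ = (insert (Fin.last m) t).erase (Fin.last m) := by rw [h]
    _ = t := erase_insert ht

lemma stK_inj {j : ℕ} {ρ ρ' : gf (VV m) j} (h : stK ρ = stK ρ') : ρ = ρ' :=
  Subtype.ext (insert_last_cancel (vnot ρ) (vnot ρ') (congrArg (·.1) h))

def esplit (m j : ℕ) :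
    (gf (VV m) (j+1)) ⊕ (gf (VV m) j) ≃ gf (univ : Finset (Fin (m+1))) (j+1) where
  toFun := Sum.elim toUk stK
  invFun σ :=
    if h : Fin.last m ∈ σ.1 then
      Sum.inr ⟨σ.1.erase (Fin.last m),
        Finset.subset_erase.2 ⟨subset_univ _, notMem_erase _ _⟩,
        by rw [card_erase_of_mem h, σ.2.2]; omega⟩
    else
      Sum.inl ⟨σ.1, Finset.subset_erase.2 ⟨σ.2.1, h⟩, σ.2.2⟩
  left_inv := by
    rintro (σ | ρ)
    · dsimp only [Sum.elim_inl]
      rw [dif_neg (fun h => (mem_erase.1 (σ.2.1 h)).1 rfl : Fin.last m ∉ (toUk σ).1)]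
      exact congrArg Sum.inl (Subtype.ext rfl)
    · dsimp only [Sum.elim_inr]
      have hmem : Fin.last m ∈ (stK ρ).1 := by
        rw [stK_coe]; exact mem_insert_self _ _
      rw [dif_pos hmem]
      refine congrArg Sum.inr (Subtype.ext ?_)
      show (stK ρ).1.erase (Fin.last m) = ρ.1
      rw [stK_coe]
      exact erase_insert (vnot ρ)
  right_inv := by
    intro σ
    dsimp only
    by_cases h : Fin.last m ∈ σ.1
    · rw [dif_pos h]
      dsimp only [Sum.elim_inr]
      refine Subtype.ext ?_
      show insert (Fin.last m) ((σ.1).erase (Fin.last m)) = σ.1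
      exact insert_erase h
    · rw [dif_neg h]
      exact Subtype.ext rfl

lemma sum_split {j : ℕ} (f : gf (univ : Finset (Fin (m+1))) (j+1) → ℝ) :
    (∑ σ, f σ) = (∑ σ : gf (VV m) (j+1), f (toUk σ)) + ∑ ρ : gf (VV m) j, f (stK ρ) := by
  rw [← Equiv.sum_comp (esplit m j) f, Fintype.sum_sum_type]
  rfl

lemma sg_insert_last {j : ℕ} (ρ : gf (VV m) j) {c : Fin (m+1)} (hc : c ≠ Fin.last m) :
    sg (insert (Fin.last m) ρ.1) c = sg ρ.1 c := by
  rw [sg_insert _ (vnot ρ) c, if_neg (not_lt.2 (Fin.le_last c)), one_mul]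

lemma bridge_mulT (j : ℕ) (ρ ρ' : gf (VV m) j) :
    (WB x univ (j+1) * (WB x univ (j+1))ᵀ) (stK ρ) (stK ρ')
      = (WB x (VV m) j * (WB x (VV m) j)ᵀ) ρ ρ' := by
  rw [mulT_apply, mulT_apply]
  have hdom : ∀ (ρ0 : gf (VV m) j),
      (univ : Finset (Fin (m+1))) \ (stK ρ0).1 = VV m \ ρ0.1 := by
    intro ρ0
    ext a
    simp only [stK_coe, mem_sdiff, mem_univ, true_and, mem_insert, not_or, mem_erase, VV]
    tauto
  rw [hdom ρ, hdom ρ']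
  refine Finset.sum_congr rfl fun a ha => Finset.sum_congr rfl fun b hb => ?_
  have hav : a ≠ Fin.last m := mem_VV_ne ρ ha
  have hbv : b ≠ Fin.last m := mem_VV_ne ρ' hb
  have hcond : (insert a (insert (Fin.last m) ρ.1) = insert b (insert (Fin.last m) ρ'.1))
      ↔ (insert a ρ.1 = insert b ρ'.1) := by
    constructor
    · intro h
      rw [Finset.insert_comm a, Finset.insert_comm b] at h
      refine insert_last_cancel ?_ ?_ h
      · intro hmem
        rcases mem_insert.1 hmem with h' | h'
        · exact hav h'.symm
        · exact vnot ρ h'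
      · intro hmem
        rcases mem_insert.1 hmem with h' | h'
        · exact hbv h'.symm
        · exact vnot ρ' h'
    · intro h
      rw [Finset.insert_comm a, Finset.insert_comm b, h]
  simp only [stK_coe]
  rw [sg_insert_last ρ hav, sg_insert_last ρ' hbv]
  exact if_congr hcond rfl rfl

lemma WB_star_hat {j : ℕ} (σ ρ : gf (VV m) j) :
    WB x univ j (toUk σ) (stK ρ)
      = if σ = ρ then x (Fin.last m) * sg σ.1 (Fin.last m) else 0 := by
  by_cases h : σ = ρ
  · subst h
    rw [if_pos rfl]
    show (∑ a ∈ univ \ (toUk σ).1,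
        if (stK σ).1 = insert a (toUk σ).1 then x a * sg (toUk σ).1 a else 0) = _
    simp only [stK_coe, toUk_coe]
    rw [Finset.sum_eq_single_of_mem (Fin.last m)
        (mem_sdiff.2 ⟨mem_univ _, vnot σ⟩)]
    · exact if_pos rfl
    · intro b hb hbv
      refine if_neg fun hc => ?_
      have : Fin.last m ∈ insert b σ.1 := hc ▸ mem_insert_self _ _
      rcases mem_insert.1 this with h' | h'
      · exact hbv h'.symm
      · exact vnot σ h'
  · rw [if_neg h]
    show (∑ a ∈ univ \ (toUk σ).1,
        if (stK ρ).1 = insert a (toUk σ).1 then x a * sg (toUk σ).1 a else 0) = _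
    simp only [stK_coe, toUk_coe]
    refine Finset.sum_eq_zero fun a ha => if_neg fun hc => ?_
    have hsub : σ.1 ⊆ ρ.1 := by
      intro y hy
      have : y ∈ insert (Fin.last m) ρ.1 := by
        rw [hc]; exact mem_insert_of_mem hy
      rcases mem_insert.1 this with h' | h'
      · exact absurd (h' ▸ hy) (vnot σ)
      · exact h'
    have : σ.1 = ρ.1 := Finset.eq_of_subset_of_card_le hsub (by rw [σ.2.2, ρ.2.2])
    exact h (Subtype.ext this)


lemma det_conjE {ι κ : Type} [Fintype ι] [DecidableEq ι] [Fintype κ] [DecidableEq κ]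
    (M : Matrix ι κ ℝ) (B : Matrix ι ι ℝ) (e : κ ≃ ι) :
    (Mᵀ * B * M).det = B.det * ((M.submatrix id ⇑e.symm).det) ^ 2 := by
  have hM : Mᵀ * B * M =
      (((M.submatrix id ⇑e.symm)ᵀ * B * (M.submatrix id ⇑e.symm)).submatrix ⇑e ⇑e) := by
    ext c c'
    simp only [Matrix.submatrix_apply, Matrix.mul_apply, Matrix.transpose_apply, id_eq,
      Equiv.symm_apply_apply]
  rw [hM, Matrix.det_submatrix_equiv_self, Matrix.det_mul, Matrix.det_mul,
    Matrix.det_transpose]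
  ring

noncomputable def Cm (k' : ℕ) : Matrix (gf (VV m) k') (gf (VV m) (k'+1)) ℝ :=
  Matrix.of fun ρ σ =>
    -(WB x univ k' (toUk ρ) (toUk σ)) / (x (Fin.last m) * sg ρ.1 (Fin.last m))

lemma row_relation (hx : ∀ i, x i ≠ 0) (k' : ℕ) (ρ : gf (VV m) k')
    (τ : gf (univ : Finset (Fin (m+1))) (k'+1+1)) :
    WB x univ (k'+1) (stK ρ) τ
      = ∑ σ : gf (VV m) (k'+1), Cm x k' ρ σ * WB x univ (k'+1) (toUk σ) τ := by
  have h0 : (∑ σu : gf (univ : Finset (Fin (m+1))) (k'+1),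
      WB x univ k' (toUk ρ) σu * WB x univ (k'+1) σu τ) = 0 := by
    have h : (WB x univ k' * WB x univ (k'+1)) (toUk ρ) τ
        = (0 : Matrix (gf (univ : Finset (Fin (m+1))) k') (gf (univ : Finset (Fin (m+1))) (k'+1+1)) ℝ) (toUk ρ) τ := by
      rw [L2 x univ k']
    simpa [Matrix.mul_apply] using h
  rw [sum_split (f := fun σu => WB x univ k' (toUk ρ) σu * WB x univ (k'+1) σu τ)] at h0
  have hsec : (∑ ρ₂ : gf (VV m) k',
      WB x univ k' (toUk ρ) (stK ρ₂) * WB x univ (k'+1) (stK ρ₂) τ)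
      = (x (Fin.last m) * sg ρ.1 (Fin.last m)) * WB x univ (k'+1) (stK ρ) τ := by
    rw [Fintype.sum_eq_single ρ]
    · rw [WB_star_hat, if_pos rfl]
    · intro ρ₂ hne
      rw [WB_star_hat, if_neg (fun hc => hne ?_), zero_mul]
      exact hc.symm ▸ rfl
  rw [hsec] at h0
  have hc0 : x (Fin.last m) * sg ρ.1 (Fin.last m) ≠ 0 :=
    mul_ne_zero (hx _) (sg_ne_zero _ _)
  have hRHS : (∑ σ : gf (VV m) (k'+1), Cm x k' ρ σ * WB x univ (k'+1) (toUk σ) τ)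
      = (-(∑ σ : gf (VV m) (k'+1),
          WB x univ k' (toUk ρ) (toUk σ) * WB x univ (k'+1) (toUk σ) τ))
        / (x (Fin.last m) * sg ρ.1 (Fin.last m)) := by
    have hpt : ∀ σ : gf (VV m) (k'+1), Cm x k' ρ σ * WB x univ (k'+1) (toUk σ) τ
        = -(WB x univ k' (toUk ρ) (toUk σ) * WB x univ (k'+1) (toUk σ) τ)
            / (x (Fin.last m) * sg ρ.1 (Fin.last m)) := fun σ => by
      show (-(WB x univ k' (toUk ρ) (toUk σ)) / (x (Fin.last m) * sg ρ.1 (Fin.last m))) * _ = _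
      rw [div_mul_eq_mul_div, neg_mul]
    rw [Finset.sum_congr rfl fun σ _ => hpt σ, ← Finset.sum_div, ← Finset.sum_neg_distrib]
  rw [hRHS, eq_div_iff hc0]
  linear_combination h0

lemma fact_det (hx : ∀ i, x i ≠ 0) (k' : ℕ) {κ : Type} [Fintype κ] [DecidableEq κ]
    (g : κ → gf (univ : Finset (Fin (m+1))) (k'+1+1)) (e : κ ≃ gf (VV m) (k'+1)) :
    ((Matrix.of fun σ t => WB x univ (k'+1) σ (g t) :
        Matrix (gf (univ : Finset (Fin (m+1))) (k'+1)) κ ℝ)ᵀ *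
      (Matrix.of fun σ t => WB x univ (k'+1) σ (g t) :
        Matrix (gf (univ : Finset (Fin (m+1))) (k'+1)) κ ℝ)).det
    = (1 + (Cm x k')ᵀ * (Cm x k')).det *
      (((Matrix.of fun σ t => WB x univ (k'+1) (toUk σ) (g t) :
        Matrix (gf (VV m) (k'+1)) κ ℝ).submatrix id ⇑e.symm).det) ^ 2 := by
  set N : Matrix (gf (univ : Finset (Fin (m+1))) (k'+1)) κ ℝ :=
    Matrix.of fun σ t => WB x univ (k'+1) σ (g t) with hN
  set Nh : Matrix (gf (VV m) (k'+1)) κ ℝ :=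
    Matrix.of fun σ t => WB x univ (k'+1) (toUk σ) (g t) with hNh
  have hmain : Nᵀ * N = Nhᵀ * Nh + (Cm x k' * Nh)ᵀ * (Cm x k' * Nh) := by
    ext t t'
    simp only [Matrix.mul_apply, Matrix.transpose_apply, Matrix.add_apply, hN, hNh,
      Matrix.of_apply]
    rw [sum_split (f := fun σ => WB x univ (k'+1) σ (g t) * WB x univ (k'+1) σ (g t'))]
    congr 1
    refine Finset.sum_congr rfl fun ρ _ => ?_
    rw [row_relation x hx k' ρ (g t), row_relation x hx k' ρ (g t')]
  have halg : Nhᵀ * Nh + (Cm x k' * Nh)ᵀ * (Cm x k' * Nh)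
      = Nhᵀ * (1 + (Cm x k')ᵀ * Cm x k') * Nh := by
    rw [Matrix.transpose_mul, Matrix.mul_add, Matrix.mul_one, Matrix.add_mul]
    simp only [Matrix.mul_assoc]
  rw [hmain, halg, det_conjE]


lemma Gstar_eq (k' : ℕ) :
    ((Matrix.of fun σ t => WB x univ (k'+1) σ (stK t) :
        Matrix (gf (univ : Finset (Fin (m+1))) (k'+1)) (gf (VV m) (k'+1)) ℝ)ᵀ *
      (Matrix.of fun σ t => WB x univ (k'+1) σ (stK t) :
        Matrix (gf (univ : Finset (Fin (m+1))) (k'+1)) (gf (VV m) (k'+1)) ℝ))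
    = (∑ i, x i ^ 2) • (1 : Matrix (gf (VV m) (k'+1)) (gf (VV m) (k'+1)) ℝ)
      + (-(WB x (VV m) (k'+1) * (WB x (VV m) (k'+1))ᵀ)) := by
  ext ρ ρ'
  have h1 : ((Matrix.of fun σ t => WB x univ (k'+1) σ (stK t) :
        Matrix (gf (univ : Finset (Fin (m+1))) (k'+1)) (gf (VV m) (k'+1)) ℝ)ᵀ *
      (Matrix.of fun σ t => WB x univ (k'+1) σ (stK t))) ρ ρ'
      = ((WB x univ (k'+1))ᵀ * WB x univ (k'+1)) (stK ρ) (stK ρ') := by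
    simp only [Matrix.mul_apply, Matrix.transpose_apply, Matrix.of_apply]
  have h2 : ((WB x univ (k'+1))ᵀ * WB x univ (k'+1)) (stK ρ) (stK ρ')
        + (WB x univ (k'+1+1) * (WB x univ (k'+1+1))ᵀ) (stK ρ) (stK ρ')
      = ((∑ i, x i ^ 2) •
          (1 : Matrix (gf (univ : Finset (Fin (m+1))) (k'+1+1))
            (gf (univ : Finset (Fin (m+1))) (k'+1+1)) ℝ)) (stK ρ) (stK ρ') := by
    have h := congrFun (congrFun (L3 x univ (k'+1)) (stK ρ)) (stK ρ')
    simpa [Matrix.add_apply] using h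
  have h3 := bridge_mulT x (k'+1) ρ ρ'
  rw [h1, Matrix.add_apply, Matrix.smul_apply, Matrix.neg_apply, smul_eq_mul]
  rw [Matrix.smul_apply, smul_eq_mul] at h2
  by_cases hρ : ρ = ρ'
  · subst hρ
    rw [Matrix.one_apply_eq] at h2 ⊢
    linarith [h2, h3]
  · rw [Matrix.one_apply_ne hρ]
    rw [Matrix.one_apply_ne (fun hc => hρ (stK_inj hc))] at h2
    linarith [h2, h3]

lemma detB_eval (hm : 1 ≤ m) (hx : ∀ i, x i ≠ 0) (k' : ℕ) :
    (1 + (Cm x k')ᵀ * Cm x k').det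
        * ((x (Fin.last m))^2) ^ (Fintype.card (gf (VV m) (k'+1)))
    = (∑ i, x i ^ 2) ^ (Fintype.card (gf (VV m) (k'+1))
          - ((VV m).card - 1).choose (k'+1))
      * ((x (Fin.last m))^2) ^ (((VV m).card - 1).choose (k'+1)) := by
  have hstar := fact_det x hx k' (g := stK) (e := Equiv.refl (gf (VV m) (k'+1)))
  -- rewrite the hat matrix as a diagonal matrix
  have hNh : (Matrix.of fun σ t => WB x univ (k'+1) (toUk σ) (stK t) :
      Matrix (gf (VV m) (k'+1)) (gf (VV m) (k'+1)) ℝ)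
      = Matrix.diagonal (fun ρ : gf (VV m) (k'+1) =>
          x (Fin.last m) * sg ρ.1 (Fin.last m)) := by
    ext σ ρ
    rw [Matrix.of_apply, WB_star_hat, Matrix.diagonal_apply]
  rw [hNh] at hstar
  have hsub : ((Matrix.diagonal (fun ρ : gf (VV m) (k'+1) =>
      x (Fin.last m) * sg ρ.1 (Fin.last m))).submatrix id
        ⇑(Equiv.refl (gf (VV m) (k'+1))).symm)
      = Matrix.diagonal (fun ρ : gf (VV m) (k'+1) =>
          x (Fin.last m) * sg ρ.1 (Fin.last m)) := by
    simp
  rw [hsub, Matrix.det_diagonal] at hstar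
  have hdiagsq : (∏ ρ : gf (VV m) (k'+1), (x (Fin.last m) * sg ρ.1 (Fin.last m))) ^ 2
      = ((x (Fin.last m))^2) ^ (Fintype.card (gf (VV m) (k'+1))) := by
    have hpt : ∀ ρ : gf (VV m) (k'+1), (x (Fin.last m) * sg ρ.1 (Fin.last m)) ^ 2
        = (x (Fin.last m))^2 := fun ρ => by
      rw [mul_pow, pow_two (sg ρ.1 (Fin.last m)), sg_sq, mul_one]
    rw [← Finset.prod_pow, Finset.prod_congr rfl (fun ρ _ => hpt ρ), Finset.prod_const,
      Finset.card_univ]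
  -- evaluate the Gram determinant via the spectral lemma
  set A := WB x (VV m) (k'+1) * (WB x (VV m) (k'+1))ᵀ with hAdef
  have hhermA : A.IsHermitian := by
    show Aᴴ = A
    rw [Matrix.conjTranspose_eq_transpose_of_trivial, hAdef, Matrix.transpose_mul,
      Matrix.transpose_transpose]
  have hherm : (-A).IsHermitian := hhermA.neg
  have hS'pos : 0 < ∑ i ∈ VV m, x i ^ 2 := by
    refine Finset.sum_pos
      (fun i _ => lt_of_le_of_ne (sq_nonneg (x i)) (Ne.symm (pow_ne_zero 2 (hx i)))) ?_
    refine ⟨⟨0, by omega⟩, mem_erase.2 ⟨?_, mem_univ _⟩⟩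
    intro hc
    have := congrArg Fin.val hc
    simp [Fin.last] at this
    omega
  have hAA : (-A) * (-A) = (-(∑ i ∈ VV m, x i ^ 2)) • (-A) := by
    rw [neg_mul_neg, Asq, neg_smul, smul_neg, neg_neg]
  have htrA : (-A).trace = (-(∑ i ∈ VV m, x i ^ 2))
      * ((((VV m).card - 1).choose (k'+1) : ℕ) : ℝ) := by
    rw [Matrix.trace_neg, traceA]
    ring
  have hdetG := spec_det hherm (neg_ne_zero.2 hS'pos.ne') hAA htrA (∑ i, x i ^ 2)
  have hSS : (∑ i : Fin (m+1), x i ^ 2) + (-(∑ i ∈ VV m, x i ^ 2)) = x (Fin.last m)^2 := by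
    have h := Finset.sum_erase_add univ (fun i => x i ^ 2) (mem_univ (Fin.last m))
    linarith
  rw [hSS] at hdetG
  rw [Gstar_eq, hdetG, hdiagsq] at hstar
  linarith [hstar]


end Main

lemma prod_over_faces {n : ℕ} (x : Fin n → ℝ) (V : Finset (Fin n)) (j : ℕ) :
    (∏ σ : gf V j, ∏ i ∈ σ.1, x i)
      = ∏ i ∈ V, x i ^ (V.card.choose j - (V.card - 1).choose j) := by
  have h1 : ∀ σ : gf V j, (∏ i ∈ σ.1, x i) = ∏ i ∈ V, (if i ∈ σ.1 then x i else 1) := by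
    intro σ
    rw [← Finset.prod_filter]
    congr 1
    ext i
    simp only [mem_filter]
    exact ⟨fun h => ⟨σ.2.1 h, h⟩, fun h => h.2⟩
  rw [Finset.prod_congr rfl fun σ _ => h1 σ, Finset.prod_comm]
  refine Finset.prod_congr rfl fun i hi => ?_
  rw [← Finset.prod_filter, Finset.prod_const, count_mem hi]


section Bridge

variable {n : ℕ} (x : Fin n → ℝ)

lemma WB_single {V : Finset (Fin n)} {j : ℕ} (σ : gf V j) (τ : gf V (j+1)) {a : Fin n}
    (ha : a ∉ σ.1) (hins : τ.1 = insert a σ.1) : WB x V j σ τ = x a * sg σ.1 a := by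
  show (∑ b ∈ V \ σ.1, if τ.1 = insert b σ.1 then x b * sg σ.1 b else 0) = _
  have haV : a ∈ V := τ.2.1 (hins ▸ mem_insert_self a σ.1)
  rw [Finset.sum_eq_single_of_mem a (mem_sdiff.2 ⟨haV, ha⟩)]
  · rw [if_pos hins]
  · intro b hb hba
    refine if_neg fun hc => hba ?_
    have hm2 : b ∈ insert a σ.1 := by rw [← hins, hc]; exact mem_insert_self b σ.1
    rcases mem_insert.1 hm2 with h | h
    · exact h
    · exact absurd h (mem_sdiff.1 hb).2

lemma WB_zero {V : Finset (Fin n)} {j : ℕ} (σ : gf V j) (τ : gf V (j+1))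
    (h : ¬ σ.1 ⊆ τ.1) : WB x V j σ τ = 0 := by
  show (∑ b ∈ V \ σ.1, if τ.1 = insert b σ.1 then x b * sg σ.1 b else 0) = 0
  refine Finset.sum_eq_zero fun b hb => if_neg fun hc => h ?_
  rw [hc]
  exact subset_insert _ _

lemma bdry_single {j : ℕ} (σF : Face n j) (τF : Face n (j+1)) {a : Fin n}
    (ha : a ∈ τF.1) (her : σF.1 = τF.1.erase a) : bdry n j σF τF = sg τF.1 a := by
  show (∑ b ∈ τF.1, if σF.1 = τF.1.erase b
      then (-1 : ℝ) ^ ((τF.1.filter (fun c => c < b)).card) else 0) = _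
  rw [Finset.sum_eq_single_of_mem a ha]
  · rw [if_pos her]; rfl
  · intro b hb hba
    refine if_neg fun hc => ?_
    have h1 : a ∈ τF.1.erase b := mem_erase.2 ⟨fun h => hba (h ▸ rfl), ha⟩
    rw [← hc, her] at h1
    exact (mem_erase.1 h1).1 rfl

lemma bdry_zero {j : ℕ} (σF : Face n j) (τF : Face n (j+1))
    (h : ¬ σF.1 ⊆ τF.1) : bdry n j σF τF = 0 := by
  show (∑ b ∈ τF.1, if σF.1 = τF.1.erase b
      then (-1 : ℝ) ^ ((τF.1.filter (fun c => c < b)).card) else 0) = 0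
  refine Finset.sum_eq_zero fun b hb => if_neg fun hc => h ?_
  rw [hc]
  exact erase_subset _ _

lemma WB_bdry {j : ℕ} (σu : gf (univ : Finset (Fin n)) j)
    (τu : gf (univ : Finset (Fin n)) (j+1)) (σF : Face n j) (τF : Face n (j+1))
    (hσ : σF.1 = σu.1) (hτ : τF.1 = τu.1) :
    WB x univ j σu τu * (∏ i ∈ σu.1, x i) = bdry n j σF τF * (∏ i ∈ τu.1, x i) := by
  by_cases hsub : σu.1 ⊆ τu.1
  · obtain ⟨a, ha⟩ : ∃ a, τu.1 \ σu.1 = {a} := by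
      refine card_eq_one.1 ?_
      rw [card_sdiff_of_subset hsub, σu.2.2, τu.2.2]; omega
    have haτ : a ∈ τu.1 := (mem_sdiff.1 (ha ▸ mem_singleton_self a)).1
    have haσ : a ∉ σu.1 := (mem_sdiff.1 (ha ▸ mem_singleton_self a)).2
    have hins : τu.1 = insert a σu.1 := by
      rw [← Finset.sdiff_union_of_subset hsub, ha]; ext y; simp [or_comm]
    have herase : σF.1 = τF.1.erase a := by rw [hσ, hτ, hins, erase_insert haσ]
    rw [WB_single x σu τu haσ hins,
      bdry_single σF τF (by rw [hτ]; exact haτ : a ∈ τF.1) herase]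
    have hsg : sg τF.1 a = sg σu.1 a := by rw [hτ, hins, sg_insert_self]
    have hprod : (∏ i ∈ τu.1, x i) = x a * ∏ i ∈ σu.1, x i := by
      rw [hins, Finset.prod_insert haσ]
    rw [hsg, hprod]; ring
  · rw [WB_zero x σu τu hsub, bdry_zero σF τF (by rw [hσ, hτ]; exact hsub), zero_mul,
      zero_mul]

end Bridge

lemma detSq_eq {ι κ : Type*} [Fintype ι] [DecidableEq ι] [Fintype κ] [DecidableEq κ]
    (M : Matrix ι κ ℝ) (e : ι ≃ κ) :
    detSq M = ((M.submatrix id ⇑e).det) ^ 2 := by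
  unfold detSq
  rw [dif_pos (⟨e⟩ : Nonempty (ι ≃ κ))]
  set e₀ : ι ≃ κ := (⟨e⟩ : Nonempty (ι ≃ κ)).some with he₀
  have hcomp : M.submatrix id ⇑e = (M.submatrix id ⇑e₀).submatrix id ⇑(e.trans e₀.symm) := by
    ext i j
    simp [Matrix.submatrix_apply]
  rw [hcomp, Matrix.det_permute' (e.trans e₀.symm)]
  rcases Int.units_eq_one_or (Equiv.Perm.sign (e.trans e₀.symm)) with h | h <;>
    rw [h] <;> simp [mul_pow]

end AMGMAux

open AMGMAux Finset in
set_option maxHeartbeats 2000000 in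
/-- inequality (3), via AM–GM: for a ℚ-acyclic complex `T`
and any `x ∈ ℝⁿ` with nonzero coordinates,
`|H̃_{k−1}(T)|² ≤ (∏ᵢ (xᵢ²)^{m₁−dᵢ}) (Σᵢ xᵢ²)^{−m₁} ((Σᵢ dᵢxᵢ²)/m₃)^{m₃}`. -/
theorem amgm_bound (n k : ℕ) (hk : 1 ≤ k) (hn : k < n)
    (T : Finset (Face n (k+1))) (hT : T.card = (n-1).choose k)
    (hdet : detSq (colSub (bdryHat n k) T) ≠ 0)
    (x : Fin n → ℝ) (hx : ∀ i, x i ≠ 0) :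
    detSq (colSub (bdryHat n k) T)
      ≤ (∏ i, (x i ^ 2) ^ (((n-2).choose (k-1) : ℤ) - (deg n k T i : ℤ))) *
          ((∑ i, x i ^ 2) ^ ((n-2).choose (k-1)))⁻¹ *
          ((∑ i, (deg n k T i : ℝ) * x i ^ 2) / ((n-1).choose k : ℝ))
            ^ ((n-1).choose k) := by
  classical
  obtain ⟨k', rfl⟩ : ∃ k', k = k' + 1 := ⟨k - 1, by omega⟩
  obtain ⟨m, rfl⟩ : ∃ m, n = m + 1 := ⟨n - 1, by omega⟩
  have hm : 1 ≤ m := by omega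
  simp only [show m + 1 - 2 = m - 1 from by omega, show k' + 1 - 1 = k' from by omega,
    show m + 1 - 1 = m from by omega] at hT ⊢
  set m1 : ℕ := (m - 1).choose k' with hm1
  set m2 : ℕ := (m - 1).choose (k' + 1) with hm2
  set m3 : ℕ := m.choose (k' + 1) with hm3
  have hpascal : m3 = m1 + m2 := by
    rw [hm3, hm1, hm2]
    have h := Nat.choose_succ_succ (m - 1) k'
    rw [show (m - 1).succ = m from by omega] at h
    exact h
  have hVcard : (VV m).card = m := by
    rw [card_erase_of_mem (mem_univ _), card_univ, Fintype.card_fin]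
    omega
  have hcard_gf : Fintype.card (gf (VV m) (k' + 1)) = m3 := by
    rw [card_gf, hVcard, hm3]
  have hSpos : (0:ℝ) < ∑ i, x i ^ 2 := by
    refine Finset.sum_pos (fun i _ =>
      lt_of_le_of_ne (sq_nonneg (x i)) (Ne.symm (pow_ne_zero 2 (hx i)))) ⟨0, mem_univ 0⟩
  have hxv2 : (0:ℝ) < x (Fin.last m) ^ 2 :=
    lt_of_le_of_ne (sq_nonneg _) (Ne.symm (pow_ne_zero 2 (hx _)))
  let E1 : gf (VV m) (k' + 1) ≃ HFace (m + 1) (k' + 1) :=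
    { toFun := fun σ => ⟨σ.1, σ.2.2, fun a ha => by
        have h1 := mem_erase.1 (σ.2.1 ha)
        have h2 : (a : ℕ) < m + 1 := a.2
        have h3 : (a : ℕ) ≠ m := fun hc => h1.1 (Fin.ext (by rw [hc]; rfl))
        omega⟩
      invFun := fun hσ => ⟨hσ.1, fun a ha => mem_erase.2
          ⟨fun hc => by
            have hlt := hσ.2.2 a ha
            rw [hc] at hlt
            simp only [Fin.val_last] at hlt
            omega, mem_univ _⟩, hσ.2.1⟩
      left_inv := fun σ => Subtype.ext rfl
      right_inv := fun hσ => Subtype.ext rfl }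
  have hcardκ : Fintype.card {τ // τ ∈ T} = m3 := by rw [Fintype.card_coe, hT]
  obtain ⟨q⟩ : Nonempty (HFace (m + 1) (k' + 1) ≃ {τ // τ ∈ T}) := by
    refine Fintype.card_eq.1 ?_
    rw [hcardκ, ← hcard_gf]
    exact (Fintype.card_congr E1).symm
  rw [detSq_eq (colSub (bdryHat (m + 1) (k' + 1)) T) q]
  set g : {τ // τ ∈ T} → gf (univ : Finset (Fin (m + 1))) (k' + 1 + 1) :=
    fun t => ⟨t.1.1, subset_univ _, t.1.2⟩ with hg
  have hfact := fact_det x hx k' g (E1.trans q).symm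
  rw [Equiv.symm_symm] at hfact
  set N : Matrix (gf (univ : Finset (Fin (m + 1))) (k' + 1)) {τ // τ ∈ T} ℝ :=
    Matrix.of fun σ t => WB x univ (k' + 1) σ (g t) with hN
  set Nh : Matrix (gf (VV m) (k' + 1)) {τ // τ ∈ T} ℝ :=
    Matrix.of fun σ t => WB x univ (k' + 1) (toUk σ) (g t) with hNh
  set Wsq : Matrix (gf (VV m) (k' + 1)) (gf (VV m) (k' + 1)) ℝ :=
    Nh.submatrix id ⇑(E1.trans q) with hWsq
  set Bsq : Matrix (gf (VV m) (k' + 1)) (gf (VV m) (k' + 1)) ℝ :=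
    ((colSub (bdryHat (m + 1) (k' + 1)) T).submatrix id ⇑q).submatrix ⇑E1 ⇑E1 with hBsq
  have hdetBsq : Bsq.det = ((colSub (bdryHat (m + 1) (k' + 1)) T).submatrix id ⇑q).det := by
    rw [hBsq]; exact Matrix.det_submatrix_equiv_self E1 _
  rw [← hdetBsq]
  have hscale : Matrix.diagonal (fun σ : gf (VV m) (k' + 1) => ∏ i ∈ σ.1, x i) * Wsq
      = Bsq * Matrix.diagonal (fun σ' : gf (VV m) (k' + 1) =>
          ∏ i ∈ ((E1.trans q) σ').1.1, x i) := by
    ext σ σ'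
    rw [Matrix.diagonal_mul, Matrix.mul_diagonal]
    show (∏ i ∈ σ.1, x i) * Wsq σ σ'
        = Bsq σ σ' * ∏ i ∈ ((E1.trans q) σ').1.1, x i
    have hWB := WB_bdry x (toUk σ) (g ((E1.trans q) σ'))
      (⟨σ.1, σ.2.2⟩ : Face (m + 1) (k' + 1)) ((E1.trans q) σ').1 rfl rfl
    simp only [toUk_coe] at hWB
    have h1 : Wsq σ σ' = WB x univ (k' + 1) (toUk σ) (g ((E1.trans q) σ')) := rfl
    have h2 : Bsq σ σ' = bdry (m + 1) (k' + 1) (⟨σ.1, σ.2.2⟩ : Face (m + 1) (k' + 1))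
        ((E1.trans q) σ').1 := rfl
    have h3 : (g ((E1.trans q) σ')).1 = ((E1.trans q) σ').1.1 := rfl
    rw [h1, h2]
    rw [h3] at hWB
    linear_combination hWB
  have hdets : (∏ σ : gf (VV m) (k' + 1), ∏ i ∈ σ.1, x i) * Wsq.det
      = Bsq.det * ∏ σ' : gf (VV m) (k' + 1), ∏ i ∈ ((E1.trans q) σ').1.1, x i := by
    have h := congrArg Matrix.det hscale
    rwa [Matrix.det_mul, Matrix.det_mul, Matrix.det_diagonal, Matrix.det_diagonal] at h
  have hP' : (∏ σ : gf (VV m) (k' + 1), ∏ i ∈ σ.1, x i) = ∏ i ∈ VV m, x i ^ m1 := by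
    rw [prod_over_faces x (VV m) (k' + 1)]
    refine Finset.prod_congr rfl fun i _ => ?_
    congr 1
    rw [hVcard]
    omega
  have hC' : (∏ σ' : gf (VV m) (k' + 1), ∏ i ∈ ((E1.trans q) σ').1.1, x i)
      = ∏ τ ∈ T, ∏ i ∈ τ.1, x i := by
    rw [Equiv.prod_comp (E1.trans q) (fun t : {τ // τ ∈ T} => ∏ i ∈ t.1.1, x i)]
    exact Finset.prod_coe_sort T (fun τ => ∏ i ∈ τ.1, x i)
  have hPD : (∏ τ ∈ T, ∏ i ∈ τ.1, x i) = ∏ i, x i ^ (deg (m + 1) (k' + 1) T i) := by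
    have h1 : ∀ τ ∈ T, (∏ i ∈ τ.1, x i)
        = ∏ i : Fin (m + 1), (if i ∈ τ.1 then x i else 1) := by
      intro τ _
      rw [← Finset.prod_filter]
      congr 1
      ext i
      simp [mem_filter]
    rw [Finset.prod_congr rfl h1, Finset.prod_comm]
    refine Finset.prod_congr rfl fun i _ => ?_
    rw [← Finset.prod_filter, Finset.prod_const]
    rfl
  have htrace : (Nᵀ * N).trace = ∑ i, (deg (m + 1) (k' + 1) T i : ℝ) * x i ^ 2 := by
    rw [Matrix.trace]
    have h1 : ∀ t : {τ // τ ∈ T}, (Nᵀ * N).diag t = ∑ a ∈ t.1.1, x a ^ 2 := by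
      intro t
      have e : (Nᵀ * N) t t
          = ((WB x univ (k' + 1))ᵀ * WB x univ (k' + 1)) (g t) (g t) := by
        simp only [hN, Matrix.mul_apply, Matrix.transpose_apply, Matrix.of_apply]
      rw [Matrix.diag_apply, e, Tmul_diag]
    rw [Finset.sum_congr rfl fun t _ => h1 t,
      Finset.sum_coe_sort T (fun τ => ∑ a ∈ τ.1, x a ^ 2)]
    have h2 : ∀ τ ∈ T, (∑ a ∈ τ.1, x a ^ 2)
        = ∑ a : Fin (m + 1), (if a ∈ τ.1 then x a ^ 2 else 0) := by
      intro τ _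
      rw [← Finset.sum_filter]
      congr 1
      ext a
      simp [mem_filter]
    rw [Finset.sum_congr rfl h2, Finset.sum_comm]
    refine Finset.sum_congr rfl fun a _ => ?_
    rw [← Finset.sum_filter, Finset.sum_const, nsmul_eq_mul]
    rfl
  have hAMGM := det_le_trace_pow (N := N)
  rw [hcardκ, htrace] at hAMGM
  have hdetB := detB_eval x hm hx k'
  rw [hcard_gf] at hdetB
  rw [show ((VV m).card - 1).choose (k' + 1) = m2 from by rw [hVcard, hm2]] at hdetB
  rw [show m3 - m2 = m1 from by omega] at hdetB
  have hSm1 : (∑ i, x i ^ 2) ^ m1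
      = (1 + (Cm x k')ᵀ * Cm x k').det * (x (Fin.last m) ^ 2) ^ m1 := by
    have h7 : ((1 + (Cm x k')ᵀ * Cm x k').det * (x (Fin.last m) ^ 2) ^ m1)
          * (x (Fin.last m) ^ 2) ^ m2
        = ((∑ i, x i ^ 2) ^ m1) * (x (Fin.last m) ^ 2) ^ m2 := by
      calc ((1 + (Cm x k')ᵀ * Cm x k').det * (x (Fin.last m) ^ 2) ^ m1)
            * (x (Fin.last m) ^ 2) ^ m2
          = (1 + (Cm x k')ᵀ * Cm x k').det * (x (Fin.last m) ^ 2) ^ (m1 + m2) := by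
            rw [pow_add]; ring
        _ = (1 + (Cm x k')ᵀ * Cm x k').det * (x (Fin.last m) ^ 2) ^ m3 := by
            rw [← hpascal]
        _ = ((∑ i, x i ^ 2) ^ m1) * (x (Fin.last m) ^ 2) ^ m2 := hdetB
    exact (mul_right_cancel₀ (pow_ne_zero _ hxv2.ne') h7).symm
  have hPDne : (∏ i, x i ^ (deg (m + 1) (k' + 1) T i)) ≠ 0 :=
    Finset.prod_ne_zero_iff.2 fun i _ => pow_ne_zero _ (hx i)
  have hKEY : Bsq.det ^ 2 * ((∏ i, x i ^ (deg (m + 1) (k' + 1) T i)) ^ 2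
        * (∑ i, x i ^ 2) ^ m1)
      ≤ (∏ i ∈ VV m, x i ^ m1) ^ 2 * (x (Fin.last m) ^ 2) ^ m1
        * ((∑ i, (deg (m + 1) (k' + 1) T i : ℝ) * x i ^ 2) / (m3 : ℝ)) ^ m3 := by
    have hBdPD : Bsq.det * (∏ i, x i ^ (deg (m + 1) (k' + 1) T i))
        = (∏ i ∈ VV m, x i ^ m1) * Wsq.det := by
      rw [← hPD, ← hC', ← hP']
      exact hdets.symm
    calc Bsq.det ^ 2 * ((∏ i, x i ^ (deg (m + 1) (k' + 1) T i)) ^ 2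
          * (∑ i, x i ^ 2) ^ m1)
        = (Bsq.det * (∏ i, x i ^ (deg (m + 1) (k' + 1) T i))) ^ 2
            * (∑ i, x i ^ 2) ^ m1 := by ring
      _ = ((∏ i ∈ VV m, x i ^ m1) * Wsq.det) ^ 2 * (∑ i, x i ^ 2) ^ m1 := by rw [hBdPD]
      _ = (∏ i ∈ VV m, x i ^ m1) ^ 2 * (x (Fin.last m) ^ 2) ^ m1
            * ((1 + (Cm x k')ᵀ * Cm x k').det * Wsq.det ^ 2) := by
          rw [hSm1]; ring
      _ = (∏ i ∈ VV m, x i ^ m1) ^ 2 * (x (Fin.last m) ^ 2) ^ m1 * (Nᵀ * N).det := by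
          rw [← hfact]
      _ ≤ (∏ i ∈ VV m, x i ^ m1) ^ 2 * (x (Fin.last m) ^ 2) ^ m1
            * ((∑ i, (deg (m + 1) (k' + 1) T i : ℝ) * x i ^ 2) / (m3 : ℝ)) ^ m3 := by
          refine mul_le_mul_of_nonneg_left hAMGM ?_
          positivity
  have hzp : (∏ i, (x i ^ 2) ^ ((m1 : ℤ) - (deg (m + 1) (k' + 1) T i : ℤ)))
        * (∏ i, x i ^ (deg (m + 1) (k' + 1) T i)) ^ 2
      = ∏ i, (x i ^ 2) ^ m1 := by
    rw [← Finset.prod_pow, ← Finset.prod_mul_distrib]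
    refine Finset.prod_congr rfl fun i _ => ?_
    have hne : x i ^ 2 ≠ 0 := pow_ne_zero _ (hx i)
    have h8 : (x i ^ (deg (m + 1) (k' + 1) T i)) ^ 2
        = (x i ^ 2) ^ (deg (m + 1) (k' + 1) T i) := by
      rw [← pow_mul, ← pow_mul, Nat.mul_comm]
    rw [h8, ← zpow_natCast (x i ^ 2) (deg (m + 1) (k' + 1) T i),
      ← zpow_natCast (x i ^ 2) m1, ← zpow_add₀ hne]
    congr 1
    omega
  have hsplit : (∏ i, (x i ^ 2) ^ m1)
      = (∏ i ∈ VV m, x i ^ m1) ^ 2 * (x (Fin.last m) ^ 2) ^ m1 := by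
    have h9 := Finset.prod_erase_mul univ (fun i => (x i ^ 2) ^ m1) (mem_univ (Fin.last m))
    have h10 : (∏ i ∈ VV m, (x i ^ 2) ^ m1) = (∏ i ∈ VV m, x i ^ m1) ^ 2 := by
      rw [← Finset.prod_pow]
      refine Finset.prod_congr rfl fun i _ => ?_
      rw [← pow_mul, ← pow_mul, Nat.mul_comm]
    rw [← h9, h10]
  have hpos : (0:ℝ) < (∏ i, x i ^ (deg (m + 1) (k' + 1) T i)) ^ 2
      * (∑ i, x i ^ 2) ^ m1 := by
    have h11 : (0:ℝ) < (∏ i, x i ^ (deg (m + 1) (k' + 1) T i)) ^ 2 :=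
      lt_of_le_of_ne (sq_nonneg _) (Ne.symm (pow_ne_zero 2 hPDne))
    exact mul_pos h11 (pow_pos hSpos m1)
  refine le_of_mul_le_mul_right ?_ hpos
  have hG : ((∏ i, (x i ^ 2) ^ ((m1 : ℤ) - (deg (m + 1) (k' + 1) T i : ℤ)))
        * ((∑ i, x i ^ 2) ^ m1)⁻¹
        * ((∑ i, (deg (m + 1) (k' + 1) T i : ℝ) * x i ^ 2) / (m3 : ℝ)) ^ m3)
        * ((∏ i, x i ^ (deg (m + 1) (k' + 1) T i)) ^ 2 * (∑ i, x i ^ 2) ^ m1)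
      = (∏ i ∈ VV m, x i ^ m1) ^ 2 * (x (Fin.last m) ^ 2) ^ m1
        * ((∑ i, (deg (m + 1) (k' + 1) T i : ℝ) * x i ^ 2) / (m3 : ℝ)) ^ m3 := by
    calc ((∏ i, (x i ^ 2) ^ ((m1 : ℤ) - (deg (m + 1) (k' + 1) T i : ℤ)))
          * ((∑ i, x i ^ 2) ^ m1)⁻¹
          * ((∑ i, (deg (m + 1) (k' + 1) T i : ℝ) * x i ^ 2) / (m3 : ℝ)) ^ m3)
          * ((∏ i, x i ^ (deg (m + 1) (k' + 1) T i)) ^ 2 * (∑ i, x i ^ 2) ^ m1)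
        = ((∏ i, (x i ^ 2) ^ ((m1 : ℤ) - (deg (m + 1) (k' + 1) T i : ℤ)))
            * (∏ i, x i ^ (deg (m + 1) (k' + 1) T i)) ^ 2)
          * ((∑ i, (deg (m + 1) (k' + 1) T i : ℝ) * x i ^ 2) / (m3 : ℝ)) ^ m3
          * (((∑ i, x i ^ 2) ^ m1)⁻¹ * (∑ i, x i ^ 2) ^ m1) := by ring
      _ = (∏ i, (x i ^ 2) ^ m1)
          * ((∑ i, (deg (m + 1) (k' + 1) T i : ℝ) * x i ^ 2) / (m3 : ℝ)) ^ m3 * 1 := by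
          rw [hzp, inv_mul_cancel₀ (pow_ne_zero m1 hSpos.ne')]
      _ = (∏ i ∈ VV m, x i ^ m1) ^ 2 * (x (Fin.last m) ^ 2) ^ m1
          * ((∑ i, (deg (m + 1) (k' + 1) T i : ℝ) * x i ^ 2) / (m3 : ℝ)) ^ m3 := by
          rw [hsplit]; ring
  rw [hG]
  exact hKEY
end
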